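/- arXiv:2009.09033 — 3 statements merged into one kernel-verified Lean document; each statement's English description precedes it below -/
import Mathlib

section
/- Let C be an extended Choquet cone with an abundance of compact idempotents and let w be a compact idempotent of C. Set A_w(C) = {f ∈ A(C) : supp(f) = w} and A_+(C_w) = {f : C_w → [0,∞) : f is continuous, linear, and f(x) = 0 if and only if x = w}. Then the restriction map f ↦ f|_{C_w} is an ordered cone isomorphism from A_w(C) onto A_+(C_w): it is additive, homogeneous with respect to scalar multiplication, bijective, and both it and its inverse are order preserving. -/
open scoped ENNReal NNReal

/-- The positive real numbers, used as scalars for cones. -/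
abbrev PosReal : Type := {t : ℝ // 0 < t}

/-- An extended Choquet cone: an algebraically ordered topological cone that is a lattice
under the algebraic order, with addition distributing over `⊓` and `⊔`, whose topology is
compact, Hausdorff and locally convex. -/
class ECCone (C : Type*) extends AddCommMonoid C, Lattice C, TopologicalSpace C where
  psmul : PosReal → C → C
  psmul_add : ∀ (t : PosReal) (x y : C), psmul t (x + y) = psmul t x + psmul t y
  add_psmul : ∀ (s t : PosReal) (x : C), psmul (s + t) x = psmul s x + psmul t x
  psmul_mul : ∀ (s t : PosReal) (x : C), psmul s (psmul t x) = psmul (s * t) x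
  one_psmul : ∀ x : C, psmul 1 x = x
  psmul_zero : ∀ t : PosReal, psmul t 0 = 0
  le_iff_exists_add : ∀ x y : C, x ≤ y ↔ ∃ z, x + z = y
  add_inf_distrib : ∀ x y z : C, x + (y ⊓ z) = (x + y) ⊓ (x + z)
  add_sup_distrib : ∀ x y z : C, x + (y ⊔ z) = (x + y) ⊔ (x + z)
  continuous_add' : Continuous fun p : C × C => p.1 + p.2
  continuous_psmul : Continuous fun p : PosReal × C => psmul p.1 p.2
  compact : CompactSpace C
  t2 : T2Space C
  locally_convex : ∀ (x : C) (U : Set C), IsOpen U → x ∈ U →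
    ∃ V : Set C, IsOpen V ∧ x ∈ V ∧ V ⊆ U ∧
      ∀ y ∈ V, ∀ z ∈ V, ∀ s t : PosReal, s.1 + t.1 = 1 → psmul s y + psmul t z ∈ V

/-- The way-below relation for functions into `[0,∞]`, relative to a set `S` of functions:
`f ≪ g` iff for every increasing sequence in `S` whose pointwise supremum dominates `g`,
some term of the sequence dominates `f`. -/
def FWayBelow {α : Type*} (S : Set (α → ℝ≥0∞)) (f g : α → ℝ≥0∞) : Prop :=
  ∀ h : ℕ → α → ℝ≥0∞, (∀ n, h n ∈ S) → Monotone h → (∀ a, g a ≤ ⨆ n, h n a) → ∃ n, f ≤ h n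

namespace ECCone

variable {C : Type*} [ECCone C]

/-- `w` is an idempotent: `2w = w`. -/
def IsIdem (w : C) : Prop := w + w = w

/-- `e` is the support idempotent of `x`: the maximum of `{z : x + z = x}`. -/
def IsSuppIdem (x e : C) : Prop := x + e = x ∧ ∀ z : C, x + z = x → z ≤ e

/-- `w₁ ≫ w₂` in the lattice of idempotents with the opposite order: whenever a nonempty
downward directed family of idempotents has an infimum `≤ w₂`, some member is `≤ w₁`. -/
def IdemWayBelow (w₁ w₂ : C) : Prop :=
  ∀ D : Set C, D.Nonempty → (∀ v ∈ D, IsIdem v) → DirectedOn (· ≥ ·) D →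
    ∀ m : C, IsGLB D m → m ≤ w₂ → ∃ v ∈ D, v ≤ w₁

/-- A compact idempotent: `w ≫ w`. -/
def IsCompactIdem (w : C) : Prop := IsIdem w ∧ IdemWayBelow w w

/-- `v` is compact relative to `w`: whenever a nonempty downward directed family of
idempotents has an infimum `≤ v`, some member `u` satisfies `u ⊓ w ≤ v`. -/
def CompactRelTo (v w : C) : Prop :=
  ∀ D : Set C, D.Nonempty → (∀ u ∈ D, IsIdem u) → DirectedOn (· ≥ ·) D →
    ∀ m : C, IsGLB D m → m ≤ v → ∃ u ∈ D, u ⊓ w ≤ v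

/-- `C` has an abundance of compact idempotents: every idempotent is an infimum
of compact idempotents. -/
def HasAbundantCompactIdem (C : Type*) [ECCone C] : Prop :=
  ∀ w : C, IsIdem w → ∃ D : Set C, (∀ v ∈ D, IsCompactIdem v) ∧ IsGLB D w

/-- `C` is strongly connected: `{x : x ≤ w}` is connected for every idempotent `w`. -/
def StronglyConnected (C : Type*) [ECCone C] : Prop :=
  ∀ w : C, IsIdem w → IsConnected {x : C | x ≤ w}

/-- A linear function on a cone: additive, homogeneous, sending `0` to `0`. -/
def IsLinFun (f : C → ℝ≥0∞) : Prop :=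
  f 0 = 0 ∧ (∀ x y : C, f (x + y) = f x + f y) ∧
    ∀ (t : PosReal) (x : C), f (psmul t x) = ENNReal.ofReal t.1 * f x

/-- Membership in `Lsc(C)`: linear and lower semicontinuous. -/
def MemLsc (f : C → ℝ≥0∞) : Prop := IsLinFun f ∧ LowerSemicontinuous f

/-- Membership in `Lsc_σ(C)`: in `Lsc(C)` and `f⁻¹((a,∞])` is σ-compact for all `a < ∞`. -/
def MemLscSigma (f : C → ℝ≥0∞) : Prop :=
  MemLsc f ∧ ∀ a : ℝ≥0, IsSigmaCompact {x : C | (a : ℝ≥0∞) < f x}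

/-- Membership in `A(C)`: linear and continuous. -/
def MemA (f : C → ℝ≥0∞) : Prop := IsLinFun f ∧ Continuous f

/-- `w = supp f`, the supremum of `{x : f x = 0}`. -/
def IsSupp (f : C → ℝ≥0∞) (w : C) : Prop := IsLUB {x : C | f x = 0} w

/-- The relation `f ◁ g`: `f ≤ (1-ε)g` for some `ε > 0`, and `f` is continuous at every
point where `g` is finite. -/
def Lhd (f g : C → ℝ≥0∞) : Prop :=
  (∃ ε : ℝ, 0 < ε ∧ ∀ x, f x ≤ ENNReal.ofReal (1 - ε) * g x) ∧
    ∀ x : C, g x ≠ ⊤ → ContinuousAt f x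

end ECCone

namespace ECCone

variable {C : Type*} [ECCone C]

/-- Membership in `A₊(C_w)`: functions on `C_w = {x : ε(x) = w}` that are continuous,
finite-valued, linear (additive and homogeneous, phrased via the ambient operations),
and vanish exactly at `w`. -/
def MemAPlus (w : C) (g : {x : C // IsSuppIdem x w} → ℝ≥0∞) : Prop :=
  Continuous g ∧ (∀ x, g x ≠ ⊤) ∧
    (∀ x y z : {x : C // IsSuppIdem x w}, x.1 + y.1 = z.1 → g z = g x + g y) ∧
    (∀ (t : PosReal) (x y : {x : C // IsSuppIdem x w}), psmul t x.1 = y.1 →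
      g y = ENNReal.ofReal t.1 * g x) ∧
    (∀ x : {x : C // IsSuppIdem x w}, g x = 0 ↔ x.1 = w)

end ECCone

namespace ECCone

open Filter Topology Set

variable {C : Type*} [ECCone C]

instance (priority := 100) : CompactSpace C := ECCone.compact
instance (priority := 100) : T2Space C := ECCone.t2

lemma le_add_self (x z : C) : x ≤ x + z := by
  rw [le_iff_exists_add]; exact ⟨z, rfl⟩

lemma le_add_self' (x z : C) : x ≤ z + x := by
  rw [add_comm]; exact le_add_self x z

lemma add_le_add_left' {x y : C} (h : x ≤ y) (c : C) : c + x ≤ c + y := by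
  rw [le_iff_exists_add] at h ⊢
  obtain ⟨z, rfl⟩ := h
  exact ⟨z, add_assoc _ _ _⟩

lemma add_le_add' {a b c d : C} (h1 : a ≤ b) (h2 : c ≤ d) : a + c ≤ b + d := by
  rw [le_iff_exists_add] at h1 h2 ⊢
  obtain ⟨z, rfl⟩ := h1; obtain ⟨u, rfl⟩ := h2
  exact ⟨z + u, by abel⟩

lemma psmul_le_psmul {x y : C} (t : PosReal) (h : x ≤ y) : psmul t x ≤ psmul t y := by
  rw [le_iff_exists_add] at h ⊢
  obtain ⟨z, rfl⟩ := h
  exact ⟨psmul t z, (psmul_add t x z).symm⟩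

lemma psmul_le_psmul_scalar {s t : PosReal} (x : C) (h : s.1 ≤ t.1) :
    psmul s x ≤ psmul t x := by
  rcases eq_or_lt_of_le h with heq | hlt
  · have : s = t := Subtype.ext heq
    rw [this]
  · have ht : t = s + ⟨t.1 - s.1, by linarith⟩ := Subtype.ext (by simp)
    rw [ht, add_psmul]
    exact le_add_self _ _

lemma psmul_le_self {t : PosReal} (x : C) (h : t.1 ≤ 1) : psmul t x ≤ x := by
  have := psmul_le_psmul_scalar (s := t) (t := 1) x h
  rwa [one_psmul] at this

/-- Continuity of scalar action with fixed scalar. -/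
lemma continuous_psmul_const (t : PosReal) : Continuous fun x : C => psmul t x := by
  have : (fun x : C => psmul t x) = (fun p : PosReal × C => psmul p.1 p.2) ∘ (fun x => (t, x)) := rfl
  rw [this]
  exact continuous_psmul.comp (continuous_const.prodMk continuous_id)

lemma continuous_add_const (c : C) : Continuous fun x : C => x + c :=
  continuous_add'.comp (continuous_id.prodMk continuous_const)

lemma continuous_const_add (c : C) : Continuous fun x : C => c + x :=
  continuous_add'.comp (continuous_const.prodMk continuous_id)

/-- The order of an extended Choquet cone is closed. -/
lemma isClosed_le_rel : IsClosed {p : C × C | p.1 ≤ p.2} := by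
  have himg : {p : C × C | p.1 ≤ p.2} = (fun q : C × C => (q.1, q.1 + q.2)) '' Set.univ := by
    ext ⟨x, y⟩
    simp only [Set.mem_setOf_eq, Set.image_univ, Set.mem_range, Prod.mk.injEq]
    constructor
    · intro h
      obtain ⟨z, hz⟩ := (le_iff_exists_add x y).mp h
      exact ⟨(x, z), rfl, hz⟩
    · rintro ⟨⟨a, z⟩, rfl, rfl⟩
      exact le_add_self _ _
  rw [himg]
  have hc : Continuous fun q : C × C => (q.1, q.1 + q.2) :=
    continuous_fst.prodMk continuous_add'
  exact (isCompact_univ.image hc).isClosed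

lemma isClosed_le_const (c : C) : IsClosed {x : C | x ≤ c} := by
  have : {x : C | x ≤ c} = (fun x : C => (x, c)) ⁻¹' {p : C × C | p.1 ≤ p.2} := rfl
  rw [this]
  exact isClosed_le_rel.preimage (continuous_id.prodMk continuous_const)

lemma isClosed_const_le (c : C) : IsClosed {x : C | c ≤ x} := by
  have : {x : C | c ≤ x} = (fun x : C => (c, x)) ⁻¹' {p : C × C | p.1 ≤ p.2} := rfl
  rw [this]
  exact isClosed_le_rel.preimage (continuous_const.prodMk continuous_id)

lemma le_of_tendsto_le {ι : Type*} {F : Filter ι} [F.NeBot] {u v : ι → C} {a b : C}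
    (hu : Tendsto u F (𝓝 a)) (hv : Tendsto v F (𝓝 b)) (h : ∀ᶠ i in F, u i ≤ v i) :
    a ≤ b := by
  have := IsClosed.mem_of_tendsto (isClosed_le_rel (C := C)) (hu.prodMk_nhds hv) h
  exact this

lemma isClosed_isIdem : IsClosed {v : C | IsIdem v} := by
  have : {v : C | IsIdem v} = (fun v : C => (v + v, v)) ⁻¹' (Set.diagonal C) := by
    ext v; simp [IsIdem, Set.diagonal]
  rw [this]
  exact isClosed_diagonal.preimage ((continuous_add'.comp (continuous_id.prodMk continuous_id)).prodMk continuous_id)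

lemma IsIdem.add {v u : C} (hv : IsIdem v) (hu : IsIdem u) : IsIdem (v + u) := by
  unfold IsIdem at *
  calc v + u + (v + u) = (v + v) + (u + u) := by abel
  _ = v + u := by rw [hv, hu]

/-- An idempotent below `y` is absorbed by `y`. -/
lemma IsIdem.add_absorb {v y : C} (hv : IsIdem v) (h : v ≤ y) : y + v = y := by
  obtain ⟨c, rfl⟩ := (le_iff_exists_add v y).mp h
  calc v + c + v = (v + v) + c := by abel
  _ = v + c := by rw [hv]

end ECCone
namespace ECCone

open Filter Topology Set

variable {C : Type*} [ECCone C]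

section nets

variable {ι : Type*} [Preorder ι] [Nonempty ι] [IsDirected ι (· ≤ ·)]
set_option linter.unusedSectionVars false

private lemma ultra_glb_of_le_map {u : ι → C} (hu : Antitone u)
    (𝒱 : Ultrafilter C) (h𝒱 : ↑𝒱 ≤ Filter.map u Filter.atTop) :
    ∃ m : C, ↑𝒱 ≤ 𝓝 m ∧ IsGLB (Set.range u) m := by
  obtain ⟨m, -, hm⟩ := isCompact_univ.ultrafilter_le_nhds 𝒱 (by simp)
  refine ⟨m, hm, ?_, ?_⟩
  · rintro x ⟨i, rfl⟩
    have hset : {y : C | y ≤ u i} ∈ 𝒱 := by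
      apply h𝒱
      rw [Filter.mem_map]
      filter_upwards [Filter.Ici_mem_atTop i] with j hj
      exact hu hj
    have : m ∈ closure {y : C | y ≤ u i} := by
      rw [mem_closure_iff_nhds]
      intro s hs
      exact Ultrafilter.nonempty_of_mem (𝒱.inter_mem (hm hs) hset)
    rwa [IsClosed.closure_eq (isClosed_le_const _)] at this
  · intro b hb
    have hset : {y : C | b ≤ y} ∈ 𝒱 := by
      apply h𝒱
      rw [Filter.mem_map]
      filter_upwards with j
      exact hb ⟨j, rfl⟩
    have : m ∈ closure {y : C | b ≤ y} := by
      rw [mem_closure_iff_nhds]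
      intro s hs
      exact Ultrafilter.nonempty_of_mem (𝒱.inter_mem (hm hs) hset)
    rwa [IsClosed.closure_eq (isClosed_const_le _)] at this

/-- A decreasing net in an extended Choquet cone converges to its infimum. -/
lemma antitone_tendsto_glb {u : ι → C} (hu : Antitone u) :
    ∃ m : C, IsGLB (Set.range u) m ∧ Tendsto u Filter.atTop (𝓝 m) := by
  obtain ⟨𝒱, h𝒱⟩ := Filter.exists_ultrafilter_le (Filter.map u Filter.atTop)
  obtain ⟨m, hm, hglb⟩ := ultra_glb_of_le_map hu 𝒱 h𝒱
  refine ⟨m, hglb, ?_⟩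
  by_contra hten
  rw [Filter.tendsto_iff_eventually] at hten
  push_neg at hten
  obtain ⟨p, hp, hfreq⟩ := hten
  rw [eventually_nhds_iff] at hp
  obtain ⟨W, hWp, hWo, hmW⟩ := hp
  have hne : (Filter.map u (Filter.atTop ⊓ Filter.principal {i | ¬ p (u i)})).NeBot := by
    rw [Filter.map_neBot_iff]
    exact Filter.frequently_iff_neBot.mp hfreq
  obtain ⟨𝒱', h𝒱'⟩ := Filter.exists_ultrafilter_le _ (h := hne)
  have h𝒱'top : ↑𝒱' ≤ Filter.map u Filter.atTop :=
    h𝒱'.trans (Filter.map_mono inf_le_left)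
  obtain ⟨m', hm', hglb'⟩ := ultra_glb_of_le_map hu 𝒱' h𝒱'top
  have : m' = m := hglb'.unique hglb
  subst this
  -- but 𝒱' lives on {y | ¬ p y} ⊇ image, and m' ∈ W ⊆ {p}
  have hset : {y : C | ¬ p y} ∈ 𝒱' := by
    apply h𝒱'
    rw [Filter.mem_map]
    filter_upwards [Filter.mem_inf_of_right (Filter.mem_principal_self _)] with j hj
    exact hj
  have hclosed : m' ∈ closure {y : C | ¬ p y} := by
    rw [mem_closure_iff_nhds]
    intro s hs
    exact Ultrafilter.nonempty_of_mem (𝒱'.inter_mem (hm' hs) hset)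
  have : ∃ y ∈ W, ¬ p y := by
    rw [mem_closure_iff_nhds] at hclosed
    obtain ⟨y, hy1, hy2⟩ := hclosed W (hWo.mem_nhds hmW)
    exact ⟨y, hy1, hy2⟩
  obtain ⟨y, hyW, hyp⟩ := this
  exact hyp (hWp y hyW)

private lemma ultra_lub_of_le_map {u : ι → C} (hu : Monotone u)
    (𝒱 : Ultrafilter C) (h𝒱 : ↑𝒱 ≤ Filter.map u Filter.atTop) :
    ∃ m : C, ↑𝒱 ≤ 𝓝 m ∧ IsLUB (Set.range u) m := by
  obtain ⟨m, -, hm⟩ := isCompact_univ.ultrafilter_le_nhds 𝒱 (by simp)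
  refine ⟨m, hm, ?_, ?_⟩
  · rintro x ⟨i, rfl⟩
    have hset : {y : C | u i ≤ y} ∈ 𝒱 := by
      apply h𝒱
      rw [Filter.mem_map]
      filter_upwards [Filter.Ici_mem_atTop i] with j hj
      exact hu hj
    have : m ∈ closure {y : C | u i ≤ y} := by
      rw [mem_closure_iff_nhds]
      intro s hs
      exact Ultrafilter.nonempty_of_mem (𝒱.inter_mem (hm hs) hset)
    rwa [IsClosed.closure_eq (isClosed_const_le _)] at this
  · intro b hb
    have hset : {y : C | y ≤ b} ∈ 𝒱 := by
      apply h𝒱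
      rw [Filter.mem_map]
      filter_upwards with j
      exact hb ⟨j, rfl⟩
    have : m ∈ closure {y : C | y ≤ b} := by
      rw [mem_closure_iff_nhds]
      intro s hs
      exact Ultrafilter.nonempty_of_mem (𝒱.inter_mem (hm hs) hset)
    rwa [IsClosed.closure_eq (isClosed_le_const _)] at this

/-- An increasing net in an extended Choquet cone converges to its supremum. -/
lemma monotone_tendsto_lub {u : ι → C} (hu : Monotone u) :
    ∃ m : C, IsLUB (Set.range u) m ∧ Tendsto u Filter.atTop (𝓝 m) := by
  obtain ⟨𝒱, h𝒱⟩ := Filter.exists_ultrafilter_le (Filter.map u Filter.atTop)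
  obtain ⟨m, hm, hlub⟩ := ultra_lub_of_le_map hu 𝒱 h𝒱
  refine ⟨m, hlub, ?_⟩
  by_contra hten
  rw [Filter.tendsto_iff_eventually] at hten
  push_neg at hten
  obtain ⟨p, hp, hfreq⟩ := hten
  rw [eventually_nhds_iff] at hp
  obtain ⟨W, hWp, hWo, hmW⟩ := hp
  have hne : (Filter.map u (Filter.atTop ⊓ Filter.principal {i | ¬ p (u i)})).NeBot := by
    rw [Filter.map_neBot_iff]
    exact Filter.frequently_iff_neBot.mp hfreq
  obtain ⟨𝒱', h𝒱'⟩ := Filter.exists_ultrafilter_le _ (h := hne)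
  have h𝒱'top : ↑𝒱' ≤ Filter.map u Filter.atTop :=
    h𝒱'.trans (Filter.map_mono inf_le_left)
  obtain ⟨m', hm', hlub'⟩ := ultra_lub_of_le_map hu 𝒱' h𝒱'top
  have : m' = m := hlub'.unique hlub
  subst this
  have hset : {y : C | ¬ p y} ∈ 𝒱' := by
    apply h𝒱'
    rw [Filter.mem_map]
    filter_upwards [Filter.mem_inf_of_right (Filter.mem_principal_self _)] with j hj
    exact hj
  have hclosed : m' ∈ closure {y : C | ¬ p y} := by
    rw [mem_closure_iff_nhds]
    intro s hs
    exact Ultrafilter.nonempty_of_mem (𝒱'.inter_mem (hm' hs) hset)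
  obtain ⟨y, hyW, hyp⟩ := by
    rw [mem_closure_iff_nhds] at hclosed
    exact hclosed W (hWo.mem_nhds hmW)
  exact hyp (hWp y hyW)

end nets

/-- Every upward-directed nonempty subset has a supremum, which is a limit of the
inclusion net. -/
lemma directedOn_exists_lub {A : Set C} (hne : A.Nonempty) (hdir : DirectedOn (· ≤ ·) A) :
    ∃ m : C, IsLUB A m ∧ m ∈ closure A := by
  haveI : Nonempty A := hne.to_subtype
  haveI : IsDirected A (· ≤ ·) := by
    constructor
    rintro ⟨a, ha⟩ ⟨b, hb⟩
    obtain ⟨c, hc, hac, hbc⟩ := hdir a ha b hb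
    exact ⟨⟨c, hc⟩, hac, hbc⟩
  have hmono : Monotone (Subtype.val : A → C) := fun a b h => h
  obtain ⟨m, hlub, ht⟩ := monotone_tendsto_lub hmono
  rw [Subtype.range_coe] at hlub
  refine ⟨m, hlub, mem_closure_of_tendsto ht ?_⟩
  filter_upwards with a
  exact a.2

end ECCone
namespace ECCone

open Filter Topology Set

variable {C : Type*} [ECCone C]

lemma IsIdem.psmul_natsucc {v : C} (hv : IsIdem v) (n : ℕ) :
    psmul ⟨(n : ℝ) + 1, by positivity⟩ v = v := by
  induction n with
  | zero =>
      have h1 : (⟨((0 : ℕ) : ℝ) + 1, by positivity⟩ : PosReal) = 1 := Subtype.ext (by norm_num)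
      rw [h1, one_psmul]
  | succ k ih =>
      have h1 : (⟨((k + 1 : ℕ) : ℝ) + 1, by positivity⟩ : PosReal)
          = ⟨(k : ℝ) + 1, by positivity⟩ + 1 := Subtype.ext (by push_cast; norm_num)
      rw [h1, add_psmul, ih, one_psmul, hv]

private lemma IsIdem.psmul_ge_one {v : C} (hv : IsIdem v) (t : PosReal) (ht : 1 ≤ t.1) :
    psmul t v = v := by
  have hle : t.1 ≤ (⌈t.1⌉₊ : ℝ) := Nat.le_ceil _
  have hn1 : 1 ≤ ⌈t.1⌉₊ := Nat.one_le_ceil_iff.mpr (by linarith)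
  obtain ⟨k, hk⟩ : ∃ k, ⌈t.1⌉₊ = k + 1 := ⟨⌈t.1⌉₊ - 1, (Nat.succ_pred_eq_of_pos hn1).symm⟩
  have hup : psmul t v ≤ v := by
    have h1 : psmul t v ≤ psmul ⟨(k : ℝ) + 1, by positivity⟩ v := by
      apply psmul_le_psmul_scalar
      · rw [hk] at hle; push_cast at hle ⊢; linarith
    rwa [hv.psmul_natsucc k] at h1
  have hdown : v ≤ psmul t v := by
    have h1 : psmul 1 v ≤ psmul t v := psmul_le_psmul_scalar v (by simpa using ht)
    rwa [one_psmul] at h1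
  exact le_antisymm hup hdown

/-- Idempotents are invariant under scalar multiplication. -/
lemma IsIdem.psmul' {v : C} (hv : IsIdem v) (t : PosReal) : psmul t v = v := by
  rcases le_or_gt 1 t.1 with h | h
  · exact hv.psmul_ge_one t h
  · have hvt : IsIdem (psmul t v) := by
      unfold IsIdem
      rw [← psmul_add, hv]
    have hinv : (0:ℝ) < t.1⁻¹ := inv_pos.mpr t.2
    have hs : (1 : ℝ) ≤ (⟨t.1⁻¹, hinv⟩ : PosReal).1 := by
      have ht1 : t.1 * t.1⁻¹ = 1 := mul_inv_cancel₀ (ne_of_gt t.2)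
      nlinarith [t.2, h.le]
    have h2 := hvt.psmul_ge_one ⟨t.1⁻¹, hinv⟩ hs
    have h3 : psmul ⟨t.1⁻¹, hinv⟩ (psmul t v) = v := by
      rw [psmul_mul]
      have : (⟨t.1⁻¹, hinv⟩ * t : PosReal) = 1 :=
        Subtype.ext (inv_mul_cancel₀ (ne_of_gt t.2))
      rw [this, one_psmul]
    rw [← h2]
    exact h3

/-- The canonical dyadic scalar `2⁻ⁿ`. -/
noncomputable def hpow (n : ℕ) : PosReal := ⟨(2 : ℝ)⁻¹ ^ n, by positivity⟩

lemma hpow_antitone {x : C} : Antitone fun n => psmul (hpow n) x := by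
  intro a b hab
  apply psmul_le_psmul_scalar
  exact pow_le_pow_of_le_one (by norm_num) (by norm_num) hab

/-- The support idempotent, constructed as the limit of `2⁻ⁿ • x`. -/
noncomputable def eps (x : C) : C :=
  (antitone_tendsto_glb (hpow_antitone (x := x))).choose

lemma isGLB_eps (x : C) : IsGLB (Set.range fun n => psmul (hpow n) x) (eps x) :=
  (antitone_tendsto_glb (hpow_antitone (x := x))).choose_spec.1

lemma tendsto_eps (x : C) :
    Tendsto (fun n => psmul (hpow n) x) Filter.atTop (𝓝 (eps x)) :=
  (antitone_tendsto_glb (hpow_antitone (x := x))).choose_spec.2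

lemma continuous_psmul_left (x : C) : Continuous fun t : PosReal => psmul t x :=
  continuous_psmul.comp (continuous_id.prodMk continuous_const)

lemma add_eps (x : C) : x + eps x = x := by
  have h1 : Tendsto (fun n => x + psmul (hpow n) x) Filter.atTop (𝓝 (x + eps x)) :=
    ((continuous_const_add x).tendsto _).comp (tendsto_eps x)
  have heq : (fun n => x + psmul (hpow n) x) = fun n => psmul (1 + hpow n) x := by
    funext n
    rw [add_psmul, one_psmul]
  have h2 : Tendsto (fun n => psmul (1 + hpow n) x) Filter.atTop (𝓝 x) := by
    have hsc : Tendsto (fun n => (1 + hpow n : PosReal)) Filter.atTop (𝓝 1) := by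
      rw [tendsto_subtype_rng]
      have : Tendsto (fun n : ℕ => (1 : ℝ) + (2 : ℝ)⁻¹ ^ n) Filter.atTop (𝓝 (1 + 0)) :=
        tendsto_const_nhds.add
          (tendsto_pow_atTop_nhds_zero_of_lt_one (by norm_num) (by norm_num))
      simpa [hpow, inv_pow] using this
    have := ((continuous_psmul_left x).tendsto 1).comp hsc
    simpa [one_psmul, Function.comp_def] using this
  rw [heq] at h1
  exact tendsto_nhds_unique h1 h2

lemma psmul_natsucc_eq_nsmul (n : ℕ) (z : C) :
    psmul ⟨(n : ℝ) + 1, by positivity⟩ z = (n + 1) • z := by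
  induction n with
  | zero =>
      have h1 : (⟨((0 : ℕ) : ℝ) + 1, by positivity⟩ : PosReal) = 1 := Subtype.ext (by norm_num)
      rw [h1, one_psmul]; simp
  | succ k ih =>
      have h1 : (⟨((k + 1 : ℕ) : ℝ) + 1, by positivity⟩ : PosReal)
          = ⟨(k : ℝ) + 1, by positivity⟩ + 1 := Subtype.ext (by push_cast; norm_num)
      rw [h1, add_psmul, ih, one_psmul, succ_nsmul z (k+1)]

lemma le_eps {x z : C} (h : x + z = x) : z ≤ eps x := by
  apply (isGLB_eps x).2
  rintro y ⟨n, rfl⟩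
  -- z = 2⁻ⁿ • (2ⁿ • z) ≤ 2⁻ⁿ • x
  have habs : ∀ m : ℕ, x + m • z = x := by
    intro m
    induction m with
    | zero => simp
    | succ k ih => rw [succ_nsmul, ← add_assoc, ih, h]
  have hpos : (0:ℝ) < (2:ℝ) ^ n := by positivity
  have hkey : psmul ⟨(2:ℝ) ^ n, hpos⟩ z ≤ x := by
    obtain ⟨k, hk⟩ : ∃ k : ℕ, 2 ^ n = k + 1 :=
      ⟨2 ^ n - 1, (Nat.succ_pred_eq_of_pos (Nat.pow_pos (by norm_num))).symm⟩
    have : (⟨(2:ℝ) ^ n, hpos⟩ : PosReal) = ⟨(k : ℝ) + 1, by positivity⟩ := by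
      apply Subtype.ext
      push_cast
      rw [show ((2:ℝ) ^ n) = ((2 ^ n : ℕ) : ℝ) by push_cast; ring, hk]
      push_cast; ring
    rw [this, psmul_natsucc_eq_nsmul]
    calc (k + 1) • z ≤ x + (k+1) • z := le_add_self' _ _
    _ = x := habs _
  have := psmul_le_psmul (hpow n) hkey
  rw [psmul_mul] at this
  have hone : (hpow n * ⟨(2:ℝ) ^ n, hpos⟩ : PosReal) = 1 := by
    apply Subtype.ext
    show (2:ℝ)⁻¹ ^ n * (2:ℝ) ^ n = 1
    rw [← mul_pow]
    norm_num
  rwa [hone, one_psmul] at this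

lemma eps_idem (x : C) : IsIdem (eps x) := by
  have hshift : Tendsto (fun n => psmul (hpow (n + 1)) x) Filter.atTop (𝓝 (eps x)) :=
    (tendsto_eps x).comp (tendsto_add_atTop_nat 1)
  have heq : (fun n => psmul (hpow (n+1)) x)
      = fun n => psmul ⟨(2:ℝ)⁻¹, by norm_num⟩ (psmul (hpow n) x) := by
    funext n
    rw [psmul_mul]
    congr 1
    apply Subtype.ext
    show (2:ℝ)⁻¹ ^ (n+1) = (2:ℝ)⁻¹ * (2:ℝ)⁻¹ ^ n
    ring
  have h2 : Tendsto (fun n => psmul ⟨(2:ℝ)⁻¹, by norm_num⟩ (psmul (hpow n) x))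
      Filter.atTop (𝓝 (psmul ⟨(2:ℝ)⁻¹, by norm_num⟩ (eps x))) :=
    ((continuous_psmul_const _).tendsto _).comp (tendsto_eps x)
  rw [heq] at hshift
  have hhalf : psmul ⟨(2:ℝ)⁻¹, by norm_num⟩ (eps x) = eps x :=
    tendsto_nhds_unique h2 hshift
  unfold IsIdem
  have : (⟨(2:ℝ)⁻¹, by norm_num⟩ + ⟨(2:ℝ)⁻¹, by norm_num⟩ : PosReal) = 1 :=
    Subtype.ext (by norm_num)
  calc eps x + eps x = psmul ⟨(2:ℝ)⁻¹, by norm_num⟩ (eps x) + psmul ⟨(2:ℝ)⁻¹, by norm_num⟩ (eps x) := by rw [hhalf]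
  _ = psmul 1 (eps x) := by rw [← add_psmul, this]
  _ = eps x := one_psmul _

lemma isSuppIdem_eps (x : C) : IsSuppIdem x (eps x) :=
  ⟨add_eps x, fun _ h => le_eps h⟩

lemma IsSuppIdem.eps_eq {x e : C} (h : IsSuppIdem x e) : eps x = e :=
  le_antisymm (h.2 _ (add_eps x)) (le_eps h.1)

lemma isSuppIdem_iff_eps {x e : C} : IsSuppIdem x e ↔ eps x = e := by
  constructor
  · exact IsSuppIdem.eps_eq
  · rintro rfl; exact isSuppIdem_eps x

lemma eps_add (x y : C) : eps (x + y) = eps x + eps y := by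
  have h1 : Tendsto (fun n => psmul (hpow n) (x + y)) Filter.atTop (𝓝 (eps (x+y))) :=
    tendsto_eps _
  have h2 : Tendsto (fun n => psmul (hpow n) x + psmul (hpow n) y) Filter.atTop
      (𝓝 (eps x + eps y)) := by
    have := (continuous_add' (C := C)).tendsto (eps x, eps y)
    exact this.comp ((tendsto_eps x).prodMk_nhds (tendsto_eps y))
  rw [show (fun n => psmul (hpow n) (x + y)) = fun n => psmul (hpow n) x + psmul (hpow n) y
    from funext fun n => psmul_add _ _ _] at h1
  exact tendsto_nhds_unique h1 h2

lemma eps_psmul (t : PosReal) (x : C) : eps (psmul t x) = eps x := by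
  have h1 : Tendsto (fun n => psmul (hpow n) (psmul t x)) Filter.atTop
      (𝓝 (eps (psmul t x))) := tendsto_eps _
  have heq : (fun n => psmul (hpow n) (psmul t x)) = fun n => psmul t (psmul (hpow n) x) := by
    funext n
    rw [psmul_mul, psmul_mul, mul_comm]
  have h2 : Tendsto (fun n => psmul t (psmul (hpow n) x)) Filter.atTop
      (𝓝 (psmul t (eps x))) := ((continuous_psmul_const t).tendsto _).comp (tendsto_eps x)
  rw [heq] at h1
  have := tendsto_nhds_unique h1 h2
  rw [this, (eps_idem x).psmul']

lemma eps_mono {x y : C} (h : x ≤ y) : eps x ≤ eps y := by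
  obtain ⟨d, rfl⟩ := (le_iff_exists_add x y).mp h
  rw [eps_add]
  exact le_add_self _ _

lemma eps_le_self (x : C) : eps x ≤ x := by
  calc eps x ≤ eps x + x := le_add_self _ _
  _ = x := by rw [add_comm, add_eps]

lemma le_eps_of_idem_le {v x : C} (hv : IsIdem v) (h : v ≤ x) : v ≤ eps x :=
  le_eps (by rw [hv.add_absorb h])

lemma IsIdem.eps_self {v : C} (hv : IsIdem v) : eps v = v :=
  le_antisymm (eps_le_self v) (le_eps_of_idem_le hv le_rfl)

lemma isSuppIdem_self_of_idem {w : C} (hw : IsIdem w) : IsSuppIdem w w :=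
  isSuppIdem_iff_eps.mpr hw.eps_self

lemma IsSuppIdem.idem {x w : C} (h : IsSuppIdem x w) : IsIdem w := by
  rw [← h.eps_eq]; exact eps_idem x

lemma IsSuppIdem.le {x w : C} (h : IsSuppIdem x w) : w ≤ x := by
  calc w ≤ w + x := le_add_self _ _
  _ = x := by rw [add_comm, h.1]

end ECCone
namespace ECCone

open Filter Topology Set

variable {C : Type*} [ECCone C]

/-- A convex subset, in the sense of the local convexity axiom. -/
def ConvexSet (U : Set C) : Prop :=
  ∀ y ∈ U, ∀ z ∈ U, ∀ s t : PosReal, s.1 + t.1 = 1 → psmul s y + psmul t z ∈ U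

lemma ConvexSet.univ : ConvexSet (Set.univ : Set C) := fun _ _ _ _ _ _ _ => trivial

lemma ConvexSet.inter {U V : Set C} (hU : ConvexSet U) (hV : ConvexSet V) :
    ConvexSet (U ∩ V) := fun y hy z hz s t hst =>
  ⟨hU y hy.1 z hz.1 s t hst, hV y hy.2 z hz.2 s t hst⟩

/-- Sums of two idempotents from a convex set remain in the set. -/
lemma ConvexSet.idem_add_mem {U : Set C} (hU : ConvexSet U) {a b : C}
    (ha : IsIdem a) (hb : IsIdem b) (haU : a ∈ U) (hbU : b ∈ U) : a + b ∈ U := by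
  have h := hU a haU b hbU ⟨(2:ℝ)⁻¹, by norm_num⟩ ⟨(2:ℝ)⁻¹, by norm_num⟩ (by norm_num)
  rwa [ha.psmul', hb.psmul'] at h

/-- A nonempty sum of idempotents from a convex set is idempotent and stays in the set. -/
lemma ConvexSet.list_sum_mem {U : Set C} (hU : ConvexSet U) :
    ∀ l : List C, l ≠ [] → (∀ p ∈ l, IsIdem p ∧ p ∈ U) → IsIdem l.sum ∧ l.sum ∈ U := by
  intro l
  induction l with
  | nil => intro h; exact absurd rfl h
  | cons a l ih =>
      intro _ hmem
      rcases List.eq_nil_or_concat l with rfl | -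
      · simpa using hmem a (by simp)
      · by_cases hl : l = []
        · subst hl; simpa using hmem a (by simp)
        · have hih := ih hl fun p hp => hmem p (List.mem_cons_of_mem a hp)
          have haI := hmem a (by simp)
          rw [List.sum_cons]
          exact ⟨haI.1.add hih.1, hU.idem_add_mem haI.1 hih.1 haI.2 hih.2⟩

/-- A point in the closure of every convex open neighbourhood of `w` equals `w`. -/
lemma eq_of_mem_forall_convex_closure {w a : C}
    (h : ∀ U : Set C, IsOpen U → w ∈ U → ConvexSet U → a ∈ closure U) : a = w := by
  by_contra hne
  have hsub : ({a}ᶜ : Set C) ∈ 𝓝 w :=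
    (isOpen_compl_singleton).mem_nhds (by simp [Ne.symm hne])
  obtain ⟨t, ht, htc, hts⟩ := exists_mem_nhds_isClosed_subset hsub
  obtain ⟨O, hOt, hOo, hwO⟩ := mem_nhds_iff.mp ht
  obtain ⟨V, hVo, hwV, hVO, hVconv⟩ := locally_convex w O hOo hwO
  have hconv : ConvexSet V := fun y hy z hz s t' hst => hVconv y hy z hz s t' hst
  have haV := h V hVo hwV hconv
  have : a ∈ t := htc.closure_subset_iff.mpr (hVO.trans hOt) haV
  exact hts this rfl

/-- The directed type of convex open neighbourhoods of a point, ordered by reverse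
inclusion. -/
def ConvOpens (w : C) : Type _ := {U : Set C // IsOpen U ∧ w ∈ U ∧ ConvexSet U}

instance (w : C) : Preorder (ConvOpens w) where
  le U V := V.1 ⊆ U.1
  le_refl U := subset_rfl
  le_trans U V W h1 h2 := Set.Subset.trans h2 h1

instance (w : C) : Nonempty (ConvOpens w) :=
  ⟨⟨Set.univ, isOpen_univ, trivial, ConvexSet.univ⟩⟩

instance (w : C) : IsDirected (ConvOpens w) (· ≤ ·) := by
  constructor
  intro U V
  refine ⟨⟨U.1 ∩ V.1, U.2.1.inter V.2.1, ⟨U.2.2.1, V.2.2.1⟩, U.2.2.2.inter V.2.2.2⟩, ?_, ?_⟩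
  · show U.1 ∩ V.1 ⊆ U.1
    exact Set.inter_subset_left
  · show U.1 ∩ V.1 ⊆ V.1
    exact Set.inter_subset_right
end ECCone
namespace ECCone

open Filter Topology Set

variable {C : Type*} [ECCone C]

/-- **Claim C**: for a compact idempotent `w`, the set of points whose support idempotent
(after translation by `w`) lies below `w` is open. -/
lemma isOpen_eps_le {w : C} (hw : IsCompactIdem w) :
    IsOpen {x : C | eps (x + w) ≤ w} := by
  rw [← isClosed_compl_iff, isClosed_iff_clusterPt]
  intro x hx
  by_contra hxR
  simp only [Set.mem_compl_iff, Set.mem_setOf_eq, not_not] at hxR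
  haveI hne : (𝓝 x ⊓ 𝓟 {y : C | eps (y + w) ≤ w}ᶜ).NeBot := hx
  obtain ⟨𝒰, h𝒰⟩ := Filter.exists_ultrafilter_le (𝓝 x ⊓ 𝓟 {y : C | eps (y + w) ≤ w}ᶜ)
  set φ : C → C := fun y => eps (y + w) with hφ
  obtain ⟨e', -, he'⟩ := isCompact_univ.ultrafilter_le_nhds (𝒰.map φ) (by simp)
  have hφten : Tendsto φ (𝒰 : Filter C) (𝓝 e') := by
    have h := he'
    rw [Ultrafilter.coe_map] at h
    exact h
  have h𝒰x : (𝒰 : Filter C) ≤ 𝓝 x := h𝒰.trans inf_le_left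
  have h𝒰c : {y : C | eps (y + w) ≤ w}ᶜ ∈ 𝒰 :=
    h𝒰 (mem_inf_of_right (mem_principal_self _))
  have haddten : Tendsto (fun y : C => y + w) (𝒰 : Filter C) (𝓝 (x + w)) :=
    ((continuous_add_const w).tendsto x).comp h𝒰x
  have hsum : Tendsto (fun y : C => (y + w) + φ y) (𝒰 : Filter C) (𝓝 ((x + w) + e')) :=
    (continuous_add'.tendsto ((x + w), e')).comp (haddten.prodMk_nhds hφten)
  have hsum2 : (fun y : C => (y + w) + φ y) = fun y : C => y + w :=
    funext fun y => add_eps (y + w)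
  rw [hsum2] at hsum
  have heq : (x + w) + e' = x + w := tendsto_nhds_unique hsum haddten
  have he'le : e' ≤ w := (le_eps heq).trans hxR
  have hwle : w ≤ e' := by
    refine le_of_tendsto_le tendsto_const_nhds hφten ?_
    filter_upwards with y
    exact le_eps_of_idem_le hw.1 (le_add_self' w y)
  have he'w : e' = w := le_antisymm he'le hwle
  rw [he'w] at hφten
  -- The tail-join construction over convex open neighbourhoods of `w`.
  set S : ConvOpens w → Set C := fun U => {y : C | eps (y + w) ≤ w}ᶜ ∩ φ ⁻¹' U.1 with hS
  have hSmem : ∀ U : ConvOpens w, S U ∈ 𝒰 := by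
    intro U
    exact Filter.inter_mem h𝒰c (hφten (U.2.1.mem_nhds U.2.2.1))
  set A : ConvOpens w → Set C := fun U =>
    {c : C | ∃ l : List C, l ≠ [] ∧ (∀ p ∈ l, p ∈ φ '' S U) ∧ l.sum = c} with hA
  have hAprop : ∀ U : ConvOpens w, ∀ c ∈ A U, IsIdem c ∧ c ∈ U.1 := by
    rintro U c ⟨l, hlne, hlmem, rfl⟩
    refine U.2.2.2.list_sum_mem l hlne ?_
    intro p hp
    obtain ⟨y, hy, rfl⟩ := hlmem p hp
    exact ⟨eps_idem (y + w), hy.2⟩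
  have hAne : ∀ U : ConvOpens w, (A U).Nonempty := by
    intro U
    obtain ⟨y, hy⟩ := Ultrafilter.nonempty_of_mem (hSmem U)
    exact ⟨φ y, [φ y], by simp, by simpa using ⟨y, hy, rfl⟩, by simp⟩
  have hAdir : ∀ U : ConvOpens w, DirectedOn (· ≤ ·) (A U) := by
    rintro U c1 ⟨l1, h1ne, h1mem, rfl⟩ c2 ⟨l2, h2ne, h2mem, rfl⟩
    refine ⟨(l1 ++ l2).sum, ⟨l1 ++ l2, by simp [h1ne], ?_, rfl⟩, ?_, ?_⟩
    · intro p hp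
      rcases List.mem_append.mp hp with h | h
      · exact h1mem p h
      · exact h2mem p h
    · rw [List.sum_append]; exact le_add_self _ _
    · rw [List.sum_append]; exact le_add_self' _ _
  have hAlub : ∀ U : ConvOpens w, ∃ m, IsLUB (A U) m ∧ m ∈ closure (A U) :=
    fun U => directedOn_exists_lub (hAne U) (hAdir U)
  choose V hVlub hVcl using hAlub
  have hVidem : ∀ U, IsIdem (V U) := by
    intro U
    have : closure (A U) ⊆ {v : C | IsIdem v} :=
      closure_minimal (fun c hc => (hAprop U c hc).1) isClosed_isIdem
    exact this (hVcl U)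
  have hVmemcl : ∀ U : ConvOpens w, V U ∈ closure U.1 := by
    intro U
    exact (closure_mono fun c hc => (hAprop U c hc).2) (hVcl U)
  have hVanti : Antitone V := by
    intro U U' hUU'
    -- U ≤ U' means U'.1 ⊆ U.1, so S U' ⊆ S U, A U' ⊆ A U, V U' ≤ V U
    apply (hVlub U').2
    intro c hc
    apply (hVlub U).1
    obtain ⟨l, hlne, hlmem, rfl⟩ := hc
    refine ⟨l, hlne, ?_, rfl⟩
    intro p hp
    obtain ⟨y, hy, rfl⟩ := hlmem p hp
    exact ⟨y, ⟨hy.1, hUU' hy.2⟩, rfl⟩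
  obtain ⟨m, hmglb, hmten⟩ := antitone_tendsto_glb hVanti
  have hmw : m = w := by
    apply eq_of_mem_forall_convex_closure
    intro U₀ hU₀o hU₀w hU₀conv
    set i₀ : ConvOpens w := ⟨U₀, hU₀o, hU₀w, hU₀conv⟩
    refine IsClosed.mem_of_tendsto isClosed_closure hmten ?_
    filter_upwards [Filter.Ici_mem_atTop i₀] with i hi
    exact (closure_mono (hi : i.1 ⊆ U₀)) (hVmemcl i)
  have hrid : ∀ v ∈ Set.range V, IsIdem v := by
    rintro _ ⟨i, rfl⟩; exact hVidem i
  have htest : IsDirected (ConvOpens w) (· ≤ ·) := inferInstance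
  have hrdir : DirectedOn (· ≥ ·) (Set.range V) := by
    rintro _ ⟨i, rfl⟩ _ ⟨j, rfl⟩
    obtain ⟨k, hik, hjk⟩ := directed_of (· ≤ ·) i j
    exact ⟨V k, ⟨k, rfl⟩, hVanti hik, hVanti hjk⟩
  obtain ⟨v, hvmem, hvle⟩ := hw.2 (Set.range V) (Set.range_nonempty V)
    hrid hrdir m hmglb (le_of_eq hmw)
  obtain ⟨i, rfl⟩ := hvmem
  obtain ⟨y, hy⟩ := Ultrafilter.nonempty_of_mem (hSmem i)
  have hyA : φ y ∈ A i := ⟨[φ y], by simp, by simpa using ⟨y, hy, rfl⟩, by simp⟩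
  have : φ y ≤ w := le_trans ((hVlub i).1 hyA) hvle
  exact hy.1 this

end ECCone
namespace ECCone

open Filter Topology Set

variable {C : Type*} [ECCone C]

/-- Every nonempty downward-directed subset has an infimum, lying in the closure. -/
lemma directedOn_exists_glb {A : Set C} (hne : A.Nonempty) (hdir : DirectedOn (· ≥ ·) A) :
    ∃ m : C, IsGLB A m ∧ m ∈ closure A := by
  let B : Set Cᵒᵈ := A
  haveI : Nonempty B := hne.to_subtype
  haveI : IsDirected B (· ≤ ·) := by
    constructor
    rintro ⟨a, ha⟩ ⟨b, hb⟩
    obtain ⟨c, hc, hac, hbc⟩ := hdir a ha b hb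
    exact ⟨⟨OrderDual.toDual c, hc⟩, hac, hbc⟩
  set u : B → C := fun b => OrderDual.ofDual b.1 with hu
  have hanti : Antitone u := fun a b h => h
  obtain ⟨m, hglb, ht⟩ := antitone_tendsto_glb hanti
  have hrange : Set.range u = A := by
    ext c
    constructor
    · rintro ⟨⟨b, hb⟩, rfl⟩
      exact hb
    · intro hc
      exact ⟨⟨OrderDual.toDual c, hc⟩, rfl⟩
  rw [hrange] at hglb
  refine ⟨m, hglb, mem_closure_of_tendsto ht ?_⟩
  filter_upwards with a
  exact a.2

/-- Boundary-crossing: scaling a point of `C_w` down into a convex open set `U ∋ w`,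
one finds a scale at which the path meets `closure U \ U`. -/
lemma exists_crossing {U : Set C} (hUo : IsOpen U) {y : C}
    (hin : ∃ n : ℕ, psmul (hpow n) y ∈ U) (hout : y ∉ closure U) :
    ∃ s : PosReal, s.1 ≤ 1 ∧ psmul s y ∈ closure U ∧ psmul s y ∉ U := by
  obtain ⟨n, hn⟩ := hin
  set T : Set ℝ := {r : ℝ | ∃ h : 0 < r, r ≤ 1 ∧ psmul ⟨r, h⟩ y ∈ U} with hT
  have hTn : ((2:ℝ)⁻¹ ^ n) ∈ T := by
    refine ⟨by positivity, ?_, ?_⟩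
    · exact pow_le_one₀ (by norm_num) (by norm_num)
    · exact hn
  have hTne : T.Nonempty := ⟨_, hTn⟩
  have hTbdd : BddAbove T := ⟨1, fun r hr => hr.choose_spec.1⟩
  set sb : ℝ := sSup T with hsb
  have hsbpos : 0 < sb := lt_of_lt_of_le (by positivity) (le_csSup hTbdd hTn)
  have hsble : sb ≤ 1 := csSup_le hTne fun r hr => hr.choose_spec.1
  have hψ : Continuous fun t : PosReal => psmul t y := continuous_psmul_left y
  obtain ⟨u, -, hut, humem⟩ := exists_seq_tendsto_sSup hTne hTbdd
  have hfpos : ∀ k, 0 < u k := fun k => (humem k).choose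
  have hften : Tendsto (fun k => psmul ⟨u k, hfpos k⟩ y) atTop (𝓝 (psmul ⟨sb, hsbpos⟩ y)) := by
    apply (hψ.tendsto _).comp
    rw [tendsto_subtype_rng]
    exact hut
  have hqcl : psmul ⟨sb, hsbpos⟩ y ∈ closure U := by
    refine mem_closure_of_tendsto hften ?_
    filter_upwards with k
    exact (humem k).choose_spec.2
  refine ⟨⟨sb, hsbpos⟩, hsble, hqcl, ?_⟩
  intro hq
  rcases eq_or_lt_of_le hsble with heq | hlt
  · have : (⟨sb, hsbpos⟩ : PosReal) = 1 := Subtype.ext heq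
    rw [this, one_psmul] at hq
    exact hout (subset_closure hq)
  · have hOpre : IsOpen {t : PosReal | psmul t y ∈ U} := hUo.preimage hψ
    obtain ⟨ε, hεpos, hball⟩ := Metric.isOpen_iff.mp hOpre ⟨sb, hsbpos⟩ hq
    set r : ℝ := min (sb + ε / 2) ((sb + 1) / 2) with hr
    have hrgt : sb < r := by
      apply lt_min
      · linarith
      · linarith
    have hrpos : 0 < r := lt_trans hsbpos hrgt
    have hrle1 : r ≤ 1 := by
      apply le_trans (min_le_right _ _)
      linarith
    have hrball : (⟨r, hrpos⟩ : PosReal) ∈ Metric.ball (⟨sb, hsbpos⟩ : PosReal) ε := by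
      rw [Metric.mem_ball, Subtype.dist_eq]
      have h1 : r - sb ≤ ε / 2 := by
        have := min_le_left (sb + ε / 2) ((sb + 1) / 2)
        rw [← hr] at this
        linarith
      rw [Real.dist_eq, abs_sub_lt_iff]
      constructor <;> linarith
    have hrT : r ∈ T := ⟨hrpos, hrle1, hball hrball⟩
    have : r ≤ sb := le_csSup hTbdd hrT
    linarith

/-- Index type for a net converging to `m` with vanishing `g`-bound. -/
def NbhdIdx (m : C) : Type _ := {p : Set C × ℝ≥0∞ // IsOpen p.1 ∧ m ∈ p.1 ∧ 0 < p.2}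

instance (m : C) : Preorder (NbhdIdx m) where
  le i j := j.1.1 ⊆ i.1.1 ∧ j.1.2 ≤ i.1.2
  le_refl i := ⟨subset_rfl, le_rfl⟩
  le_trans i j k h1 h2 := ⟨Set.Subset.trans h2.1 h1.1, le_trans h2.2 h1.2⟩

instance (m : C) : Nonempty (NbhdIdx m) :=
  ⟨⟨(Set.univ, 1), isOpen_univ, trivial, by norm_num⟩⟩

instance (m : C) : IsDirected (NbhdIdx m) (· ≤ ·) := by
  constructor
  intro i j
  refine ⟨⟨(i.1.1 ∩ j.1.1, min i.1.2 j.1.2), i.2.1.inter j.2.1, ⟨i.2.2.1, j.2.2.1⟩,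
    lt_min i.2.2.2 j.2.2.2⟩, ⟨?_, ?_⟩, ⟨?_, ?_⟩⟩
  · exact Set.inter_subset_left
  · exact min_le_left _ _
  · exact Set.inter_subset_right
  · exact min_le_right _ _

end ECCone
namespace ECCone

open Filter Topology Set

variable {C : Type*} [ECCone C]

/-- The set of `C_w` points with `g`-value at most `M`, viewed inside `C`. -/
def SB (w : C) (g : {x : C // IsSuppIdem x w} → ℝ≥0∞) (M : ℝ≥0∞) : Set C :=
  Subtype.val '' {y | g y ≤ M}

lemma SB_subset_ge (w : C) (g : {x : C // IsSuppIdem x w} → ℝ≥0∞) (M : ℝ≥0∞) :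
    SB w g M ⊆ {x : C | w ≤ x} := by
  rintro _ ⟨y, -, rfl⟩
  exact y.2.le

lemma SB_mono (w : C) (g : {x : C // IsSuppIdem x w} → ℝ≥0∞) {M M' : ℝ≥0∞} (h : M ≤ M') :
    SB w g M ⊆ SB w g M' := by
  rintro _ ⟨y, hy, rfl⟩
  exact ⟨y, le_trans hy h, rfl⟩

lemma psmul_SB {w : C} {g : {x : C // IsSuppIdem x w} → ℝ≥0∞} (hg : MemAPlus w g)
    (t : PosReal) (M : ℝ≥0∞) :
    (fun x => psmul t x) '' SB w g M ⊆ SB w g (ENNReal.ofReal t.1 * M) := by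
  rintro _ ⟨_, ⟨y, hy, rfl⟩, rfl⟩
  have hsupp : IsSuppIdem (psmul t y.1) w := by
    rw [isSuppIdem_iff_eps, eps_psmul, y.2.eps_eq]
  refine ⟨⟨psmul t y.1, hsupp⟩, ?_, rfl⟩
  have := hg.2.2.2.1 t y ⟨psmul t y.1, hsupp⟩ rfl
  rw [Set.mem_setOf_eq, this]
  exact mul_le_mul' le_rfl hy

lemma g_le_of_mem_closure_SB {w : C} {g : {x : C // IsSuppIdem x w} → ℝ≥0∞}
    (hg : MemAPlus w g) {q : C} (hq : IsSuppIdem q w) {M : ℝ≥0∞}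
    (h : q ∈ closure (SB w g M)) : g ⟨q, hq⟩ ≤ M := by
  have hcl : IsClosed {y : {x : C // IsSuppIdem x w} | g y ≤ M} :=
    isClosed_le hg.1 continuous_const
  have : (⟨q, hq⟩ : {x : C // IsSuppIdem x w}) ∈ closure {y | g y ≤ M} :=
    closure_subtype.mpr h
  rwa [hcl.closure_eq] at this

/-- The "small at infinity" set: points approximable by `C_w` points with arbitrarily
small `g`-value. -/
def NNset (w : C) (g : {x : C // IsSuppIdem x w} → ℝ≥0∞) : Set C :=
  {q : C | ∀ δ : ℝ≥0∞, 0 < δ → q ∈ closure (SB w g δ)}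

lemma NNset_isClosed (w : C) (g : {x : C // IsSuppIdem x w} → ℝ≥0∞) :
    IsClosed (NNset w g) := by
  have : NNset w g = ⋂ (δ : ℝ≥0∞), ⋂ (_ : 0 < δ), closure (SB w g δ) := by
    ext q
    simp [NNset, Set.mem_iInter]
  rw [this]
  exact isClosed_iInter fun δ => isClosed_iInter fun _ => isClosed_closure

lemma NNset_subset_ge (w : C) (g : {x : C // IsSuppIdem x w} → ℝ≥0∞) :
    NNset w g ⊆ {x : C | w ≤ x} := by
  intro q hq
  have h1 := hq 1 (by norm_num)
  exact (closure_minimal (SB_subset_ge w g 1) (isClosed_const_le w)) h1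

lemma NNset_psmul {w : C} {g : {x : C // IsSuppIdem x w} → ℝ≥0∞} (hg : MemAPlus w g)
    {q : C} (hq : q ∈ NNset w g) (t : PosReal) (ht : t.1 ≤ 1) : psmul t q ∈ NNset w g := by
  intro δ hδ
  have h1 : psmul t q ∈ closure ((fun x => psmul t x) '' SB w g δ) :=
    image_closure_subset_closure_image (continuous_psmul_const t) ⟨q, hq δ hδ, rfl⟩
  refine closure_mono ?_ h1
  refine (psmul_SB hg t δ).trans (SB_mono w g ?_)
  exact mul_le_of_le_one_left zero_le (ENNReal.ofReal_le_one.mpr ht)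

lemma NNset_eps {w : C} {g : {x : C // IsSuppIdem x w} → ℝ≥0∞} (hg : MemAPlus w g)
    {q : C} (hq : q ∈ NNset w g) : eps q ∈ NNset w g := by
  intro δ hδ
  refine IsClosed.mem_of_tendsto isClosed_closure (tendsto_eps q) ?_
  filter_upwards with n
  have := NNset_psmul hg hq (hpow n) (pow_le_one₀ (by norm_num) (by norm_num))
  exact this δ hδ

lemma NNset_suppIdem_eq {w : C} {g : {x : C // IsSuppIdem x w} → ℝ≥0∞} (hg : MemAPlus w g)
    {q : C} (hq : q ∈ NNset w g) (hsupp : IsSuppIdem q w) : q = w := by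
  have hle : ∀ δ : ℝ≥0∞, 0 < δ → g ⟨q, hsupp⟩ ≤ δ :=
    fun δ hδ => g_le_of_mem_closure_SB hg hsupp (hq δ hδ)
  have h0 : g ⟨q, hsupp⟩ = 0 := by
    by_contra h0
    rcases eq_or_ne (g ⟨q, hsupp⟩) ⊤ with htop | htop
    · have := hle 1 (by norm_num)
      rw [htop] at this
      simp at this
    · have hpos : 0 < g ⟨q, hsupp⟩ := pos_iff_ne_zero.mpr h0
      have hhalf : g ⟨q, hsupp⟩ / 2 < g ⟨q, hsupp⟩ := ENNReal.half_lt_self h0 htop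
      have := hle (g ⟨q, hsupp⟩ / 2) (ENNReal.half_pos h0)
      exact absurd this (not_le.mpr hhalf)
  exact (hg.2.2.2.2 ⟨q, hsupp⟩).mp h0

end ECCone
namespace ECCone

open Filter Topology Set

variable {C : Type*} [ECCone C]

/-- **Claim B**: for a compact idempotent `w` and `g ∈ A₊(C_w)`, the bounded sublevel sets
of `g` (inside `C`) are closed. -/
lemma isClosed_SB {w : C} (hw : IsCompactIdem w) {g : {x : C // IsSuppIdem x w} → ℝ≥0∞}
    (hg : MemAPlus w g) {M : ℝ≥0∞} (hM : M ≠ ⊤) : IsClosed (SB w g M) := by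
  rw [isClosed_iff_clusterPt]
  intro z hz
  have hzc : z ∈ closure (SB w g M) := mem_closure_iff_clusterPt.mpr hz
  have hwz : w ≤ z := (closure_minimal (SB_subset_ge w g M) (isClosed_const_le w)) hzc
  -- main claim: eps z ≤ w
  have hez : eps z ≤ w := by
    by_contra hE
    -- eps z belongs to the null set NNset
    have hscale : ∀ δ : ℝ≥0∞, 0 < δ → ∃ n : ℕ, ENNReal.ofReal ((2:ℝ)⁻¹ ^ n) * M ≤ δ := by
      intro δ hδ
      rcases eq_or_ne M 0 with rfl | hM0
      · exact ⟨0, by simp⟩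
      · have hdiv : (0 : ℝ≥0∞) < δ / M := ENNReal.div_pos (ne_of_gt hδ) hM
        obtain ⟨n, hn⟩ := ENNReal.exists_inv_two_pow_lt (ne_of_gt hdiv)
        refine ⟨n, ?_⟩
        have hofr : ENNReal.ofReal ((2:ℝ)⁻¹ ^ n) = (2 : ℝ≥0∞)⁻¹ ^ n := by
          rw [ENNReal.ofReal_pow (by norm_num)]
          congr 1
          rw [ENNReal.ofReal_inv_of_pos (by norm_num)]
          norm_num
        rw [hofr]
        exact ENNReal.mul_le_of_le_div hn.le
    have hofr_anti : ∀ n n' : ℕ, n ≤ n' →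
        ENNReal.ofReal ((2:ℝ)⁻¹ ^ n') ≤ ENNReal.ofReal ((2:ℝ)⁻¹ ^ n) := by
      intro n n' hnn
      exact ENNReal.ofReal_le_ofReal
        (pow_le_pow_of_le_one (by norm_num) (by norm_num) hnn)
    have hzsc : ∀ n : ℕ, psmul (hpow n) z ∈
        closure (SB w g (ENNReal.ofReal ((2:ℝ)⁻¹ ^ n) * M)) := by
      intro n
      have h1 : psmul (hpow n) z ∈ closure ((fun x => psmul (hpow n) x) '' SB w g M) :=
        image_closure_subset_closure_image (continuous_psmul_const _) ⟨z, hzc, rfl⟩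
      exact closure_mono (psmul_SB hg (hpow n) M) h1
    have heNN : eps z ∈ NNset w g := by
      intro δ hδ
      obtain ⟨n₀, hn₀⟩ := hscale δ hδ
      refine IsClosed.mem_of_tendsto isClosed_closure (tendsto_eps z) ?_
      filter_upwards [Filter.Ici_mem_atTop n₀] with n hn
      refine closure_mono (SB_mono w g ?_) (hzsc n)
      exact le_trans (mul_le_mul' (hofr_anti n₀ n hn) le_rfl) hn₀
    -- Zorn: a minimal element of P
    set P : Set C := {u : C | IsIdem u ∧ u ∈ NNset w g ∧ u ≤ eps z ∧ ¬ u ≤ w} with hP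
    have heP : eps z ∈ P := ⟨eps_idem z, heNN, le_rfl, hE⟩
    have hzorn : ∃ m, m ∈ P ∧ ∀ u ∈ P, u ≤ m → m ≤ u := by
      have hchains : ∀ c ⊆ {u : Cᵒᵈ | OrderDual.ofDual u ∈ P}, IsChain (· ≤ ·) c →
          ∃ ub ∈ {u : Cᵒᵈ | OrderDual.ofDual u ∈ P}, ∀ z ∈ c, z ≤ ub := by
        intro c hcP hchain
        rcases c.eq_empty_or_nonempty with rfl | hcne
        · refine ⟨OrderDual.toDual (eps z), heP, ?_⟩
          intro a ha
          exact absurd ha (Set.notMem_empty a)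
        · -- c is a chain in the dual order, i.e. downward directed in C
          have hdir : DirectedOn (· ≥ ·) (OrderDual.ofDual '' c) := by
            rintro _ ⟨a, ha, rfl⟩ _ ⟨b, hb, rfl⟩
            rcases eq_or_ne a b with rfl | hab
            · exact ⟨OrderDual.ofDual a, ⟨a, ha, rfl⟩, le_rfl, le_rfl⟩
            · rcases hchain ha hb hab with h | h
              · exact ⟨OrderDual.ofDual b, ⟨b, hb, rfl⟩, h, le_rfl⟩
              · exact ⟨OrderDual.ofDual a, ⟨a, ha, rfl⟩, le_rfl, h⟩
          have hcne' : (OrderDual.ofDual '' c).Nonempty := hcne.image _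
          obtain ⟨k, hkglb, hkcl⟩ := directedOn_exists_glb hcne' hdir
          have hcIdem : ∀ v ∈ OrderDual.ofDual '' c, IsIdem v := by
            rintro _ ⟨a, ha, rfl⟩
            exact (hcP ha).1
          have hkIdem : IsIdem k := by
            have : closure (OrderDual.ofDual '' c) ⊆ {v : C | IsIdem v} :=
              closure_minimal hcIdem isClosed_isIdem
            exact this hkcl
          have hkNN : k ∈ NNset w g := by
            have : closure (OrderDual.ofDual '' c) ⊆ NNset w g :=
              closure_minimal (by rintro _ ⟨a, ha, rfl⟩; exact (hcP ha).2.1)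
                (NNset_isClosed w g)
            exact this hkcl
          obtain ⟨y₀, hy₀⟩ := hcne
          have hkez : k ≤ eps z :=
            le_trans (hkglb.1 ⟨y₀, hy₀, rfl⟩) (hcP hy₀).2.2.1
          have hknw : ¬ k ≤ w := by
            intro hkw
            obtain ⟨v, hvmem, hvw⟩ := hw.2 (OrderDual.ofDual '' c) hcne' hcIdem hdir k hkglb hkw
            obtain ⟨a, ha, rfl⟩ := hvmem
            exact (hcP ha).2.2.2 hvw
          refine ⟨OrderDual.toDual k, ⟨hkIdem, hkNN, hkez, hknw⟩, ?_⟩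
          intro a ha
          exact hkglb.1 ⟨a, ha, rfl⟩
      obtain ⟨m, hmax⟩ := zorn_le₀ (α := Cᵒᵈ) {u : Cᵒᵈ | OrderDual.ofDual u ∈ P} hchains
      refine ⟨OrderDual.ofDual m, hmax.1, ?_⟩
      intro u hu hum
      exact hmax.2 (y := OrderDual.toDual u) hu hum
    obtain ⟨m, hmP, hmmin⟩ := hzorn
    -- separating convex neighbourhood of w avoiding m
    have hsep : ∃ U : Set C, IsOpen U ∧ w ∈ U ∧ ConvexSet U ∧ m ∉ closure U := by
      by_contra hcon
      push_neg at hcon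
      have : m = w := eq_of_mem_forall_convex_closure fun U h1 h2 h3 => hcon U h1 h2 h3
      exact hmP.2.2.2 (le_of_eq this)
    obtain ⟨U, hUo, hwU, hUconv, hmU⟩ := hsep
    -- the approximating net
    have hych : ∀ i : NbhdIdx m, ∃ y : C,
        y ∈ SB w g i.1.2 ∧ y ∈ i.1.1 ∧ y ∉ closure U := by
      intro i
      have hm1 : m ∈ closure (SB w g i.1.2) := hmP.2.1 i.1.2 i.2.2.2
      have hO' : IsOpen (i.1.1 ∩ (closure U)ᶜ) := i.2.1.inter isClosed_closure.isOpen_compl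
      have hmO' : m ∈ i.1.1 ∩ (closure U)ᶜ := ⟨i.2.2.1, hmU⟩
      obtain ⟨y, hy1, hy2⟩ := mem_closure_iff.mp hm1 _ hO' hmO'
      exact ⟨y, hy2, hy1.1, hy1.2⟩
    choose y hySB hyO hyU using hych
    -- the crossing scales
    have hsch : ∀ i : NbhdIdx m, ∃ s : PosReal,
        s.1 ≤ 1 ∧ psmul s (y i) ∈ closure U ∧ psmul s (y i) ∉ U := by
      intro i
      apply exists_crossing hUo ?_ (hyU i)
      · -- eps (y i) = w ∈ U so small multiples enter U
        obtain ⟨yy, -, hval⟩ := hySB i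
        have heps : eps (y i) = w := by rw [← hval, yy.2.eps_eq]
        have := (tendsto_eps (y i)).eventually (eventually_mem_nhds_iff.mpr
          ((hUo.mem_nhds (by rw [heps]; exact hwU))))
        obtain ⟨n, hn⟩ := this.exists
        exact ⟨n, mem_of_mem_nhds hn⟩
    choose s hs1 hscl hsU using hsch
    set q : NbhdIdx m → C := fun i => psmul (s i) (y i) with hq
    have hqSB : ∀ i : NbhdIdx m, q i ∈ SB w g i.1.2 := by
      intro i
      have h1 : q i ∈ SB w g (ENNReal.ofReal (s i).1 * i.1.2) :=
        psmul_SB hg (s i) i.1.2 ⟨y i, hySB i, rfl⟩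
      exact SB_mono w g
        (mul_le_of_le_one_left zero_le (ENNReal.ofReal_le_one.mpr (hs1 i))) h1
    -- pass to an ultrafilter
    obtain ⟨𝒱, h𝒱⟩ := Filter.exists_ultrafilter_le (Filter.atTop : Filter (NbhdIdx m))
    obtain ⟨qs, -, hqs⟩ := isCompact_univ.ultrafilter_le_nhds (𝒱.map q) (by simp)
    have hqten : Tendsto q (𝒱 : Filter (NbhdIdx m)) (𝓝 qs) := by
      have h := hqs
      rw [Ultrafilter.coe_map] at h
      exact h
    have hyten : Tendsto y (𝒱 : Filter (NbhdIdx m)) (𝓝 m) := by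
      refine Tendsto.mono_left ?_ h𝒱
      refine (nhds_basis_opens m).tendsto_right_iff.mpr ?_
      rintro O ⟨hmO, hOo⟩
      have h1 : (0:ℝ≥0∞) < 1 := by norm_num
      set i₀ : NbhdIdx m := ⟨(O, 1), hOo, hmO, h1⟩ with hi₀
      filter_upwards [Filter.Ici_mem_atTop i₀] with i hi
      exact hi.1 (hyO i)
    have hqley : ∀ i, q i ≤ y i := fun i => psmul_le_self (y i) (hs1 i)
    have hqsm : qs ≤ m := le_of_tendsto_le hqten hyten (Filter.Eventually.of_forall hqley)
    have hqsF : qs ∈ closure U ∩ Uᶜ := by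
      refine IsClosed.mem_of_tendsto (isClosed_closure.inter hUo.isClosed_compl) hqten ?_
      filter_upwards with i
      exact ⟨hscl i, hsU i⟩
    have hqsNN : qs ∈ NNset w g := by
      intro δ hδ
      refine mem_closure_of_tendsto hqten ?_
      set i₀ : NbhdIdx m := ⟨(Set.univ, δ), isOpen_univ, trivial, hδ⟩ with hi₀
      filter_upwards [h𝒱 (Filter.Ici_mem_atTop i₀)] with i hi
      exact SB_mono w g hi.2 (hqSB i)
    have hwqs : w ≤ qs := NNset_subset_ge w g hqsNN
    set r : C := eps qs with hr
    have hrNN : r ∈ NNset w g := NNset_eps hg hqsNN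
    have hrIdem : IsIdem r := eps_idem qs
    have hrm : r ≤ m := le_trans (eps_le_self qs) hqsm
    rcases Classical.em (r ≤ w) with hrw | hrw
    · -- then qs ∈ C_w, so qs = w ∈ U, contradicting qs ∉ U
      have hwr : w ≤ r := le_eps_of_idem_le hw.1 hwqs
      have hreq : r = w := le_antisymm hrw hwr
      have hsupp : IsSuppIdem qs w := isSuppIdem_iff_eps.mpr hreq
      have : qs = w := NNset_suppIdem_eq hg hqsNN hsupp
      rw [this] at hqsF
      exact hqsF.2 hwU
    · -- r ∈ P, so by minimality m ≤ r ≤ qs ≤ m, so m = qs ∈ closure U, contradiction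
      have hrP : r ∈ P := ⟨hrIdem, hrNN, le_trans hrm hmP.2.2.1, hrw⟩
      have hmr : m ≤ r := hmmin r hrP hrm
      have : m ≤ qs := le_trans hmr (eps_le_self qs)
      have hmqs : m = qs := le_antisymm this hqsm
      rw [hmqs] at hmU
      exact hmU hqsF.1
  -- conclusion: z ∈ SB w g M
  have hwez : w ≤ eps z := le_eps_of_idem_le hw.1 hwz
  have hsupp : IsSuppIdem z w := isSuppIdem_iff_eps.mpr (le_antisymm hez hwez)
  exact ⟨⟨z, hsupp⟩, g_le_of_mem_closure_SB hg hsupp hzc, rfl⟩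

end ECCone
namespace ECCone

open Filter Topology Set

variable {C : Type*} [ECCone C]

lemma IsLinFun.mono {f : C → ℝ≥0∞} (hf : IsLinFun f) : Monotone f := by
  intro x y hxy
  obtain ⟨d, rfl⟩ := (le_iff_exists_add x y).mp hxy
  rw [hf.2.1]
  exact le_self_add

/-- For `f ∈ A(C)` with support `w`, the zero set of `f` is `{x : x ≤ w}` and `f w = 0`. -/
lemma MemA.apply_supp_eq_zero {f : C → ℝ≥0∞} {w : C} (hf : MemA f) (hs : IsSupp f w) :
    f w = 0 := by
  set Z : Set C := {x : C | f x = 0} with hZ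
  have hZcl : IsClosed Z := by
    have : Z = f ⁻¹' {0} := rfl
    rw [this]
    exact (isClosed_singleton).preimage hf.2
  have hZne : Z.Nonempty := ⟨0, hf.1.1⟩
  have hZdir : DirectedOn (· ≤ ·) Z := by
    intro a ha b hb
    refine ⟨a ⊔ b, ?_, le_sup_left, le_sup_right⟩
    have h1 : a ⊔ b ≤ a + b := sup_le (le_add_self a b) (le_add_self' b a)
    have h2 : f (a ⊔ b) ≤ f (a + b) := hf.1.mono h1
    rw [hf.1.2.1, ha, hb, add_zero] at h2
    exact le_antisymm h2 zero_le
  obtain ⟨m, hmlub, hmcl⟩ := directedOn_exists_lub hZne hZdir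
  have hmw : m = w := hmlub.unique hs
  rw [← hmw]
  exact hZcl.closure_subset hmcl

lemma MemA.top_of_eps_not_le {f : C → ℝ≥0∞} {w : C} (hf : MemA f) (hs : IsSupp f w)
    {y : C} (h : ¬ eps y ≤ w) : f y = ⊤ := by
  by_contra htop
  have h1 : f (y + eps y) = f y := by rw [add_eps]
  rw [hf.1.2.1] at h1
  have h2 : f y + f (eps y) = f y + 0 := by rwa [add_zero]
  have h3 : f (eps y) = 0 := (ENNReal.add_right_inj htop).mp h2
  exact h (hs.1 h3)

lemma MemA.ne_top_on_Cw {f : C → ℝ≥0∞} {w : C} (hf : MemA f) (hs : IsSupp f w)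
    {x : C} (hx : IsSuppIdem x w) : f x ≠ ⊤ := by
  intro htop
  have hfw : f w = 0 := hf.apply_supp_eq_zero hs
  have h1 : Tendsto (fun n => f (psmul (hpow n) x)) Filter.atTop (𝓝 (f (eps x))) :=
    (hf.2.tendsto _).comp (tendsto_eps x)
  have h2 : (fun n => f (psmul (hpow n) x)) = fun _ : ℕ => (⊤ : ℝ≥0∞) := by
    funext n
    rw [hf.1.2.2, htop]
    refine ENNReal.mul_top ?_
    simp only [ne_eq, ENNReal.ofReal_eq_zero, not_le]
    exact (hpow n).2
  rw [h2] at h1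
  have h3 : f (eps x) = ⊤ := tendsto_nhds_unique h1 tendsto_const_nhds
  rw [hx.eps_eq, hfw] at h3
  simp at h3

/-- The key order lemma: inequalities on `C_w` propagate to all of `C`. -/
lemma le_of_restrict_le {w : C} (hw : IsCompactIdem w) {f g : C → ℝ≥0∞}
    (hf : MemA f) (hfs : IsSupp f w) (hg : MemA g) (hgs : IsSupp g w)
    (h : (fun x : {x : C // IsSuppIdem x w} => f x.1) ≤
      fun x : {x : C // IsSuppIdem x w} => g x.1) : f ≤ g := by
  intro x
  have hfw : f w = 0 := hf.apply_supp_eq_zero hfs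
  have hgw : g w = 0 := hg.apply_supp_eq_zero hgs
  have hfx : f (x + w) = f x := by rw [hf.1.2.1, hfw, add_zero]
  have hgx : g (x + w) = g x := by rw [hg.1.2.1, hgw, add_zero]
  rcases Classical.em (eps (x + w) ≤ w) with he | he
  · have hwe : w ≤ eps (x + w) := le_eps_of_idem_le hw.1 (le_add_self' w x)
    have hsupp : IsSuppIdem (x + w) w := isSuppIdem_iff_eps.mpr (le_antisymm he hwe)
    have := h ⟨x + w, hsupp⟩
    simp only at this
    calc f x = f (x + w) := hfx.symm
    _ ≤ g (x + w) := this
    _ = g x := hgx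
  · have hgtop : g (x + w) = ⊤ := hg.top_of_eps_not_le hgs he
    rw [hgx] at hgtop
    rw [hgtop]
    exact le_top

end ECCone
namespace ECCone

open Filter Topology Set

variable {C : Type*} [ECCone C]

lemma exists_extension {w : C} (hw : IsCompactIdem w)
    {g : {x : C // IsSuppIdem x w} → ℝ≥0∞} (hg : MemAPlus w g) :
    ∃ f : C → ℝ≥0∞, MemA f ∧ IsSupp f w ∧
      (fun x : {x : C // IsSuppIdem x w} => f x.1) = g := by
  classical
  set F : C → ℝ≥0∞ := fun x => if h : IsSuppIdem (x + w) w then g ⟨x + w, h⟩ else ⊤ with hF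
  have hSw : IsSuppIdem w w := isSuppIdem_self_of_idem hw.1
  have hcond : ∀ y : C, IsSuppIdem (y + w) w ↔ eps (y + w) ≤ w := by
    intro y
    rw [isSuppIdem_iff_eps]
    exact ⟨le_of_eq, fun h => le_antisymm h (le_eps_of_idem_le hw.1 (le_add_self' w y))⟩
  have hadd_eq : ∀ x y : C, (x + w) + (y + w) = (x + y) + w := by
    intro x y
    have h1 : (x + w) + (y + w) = (x + y) + (w + w) := by abel
    rw [h1, hw.1]
  have hFw : F w = 0 := by
    have hs : IsSuppIdem (w + w) w := by rw [hw.1]; exact hSw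
    have h1 : F w = g ⟨w + w, hs⟩ := dif_pos hs
    have h2 : (⟨w + w, hs⟩ : {x : C // IsSuppIdem x w}) = ⟨w, hSw⟩ := Subtype.ext hw.1
    rw [h1, h2]
    exact (hg.2.2.2.2 _).mpr rfl
  -- linearity
  have hlin : IsLinFun F := by
    refine ⟨?_, ?_, ?_⟩
    · -- F 0 = 0
      have hs : IsSuppIdem ((0 : C) + w) w := by rw [zero_add]; exact hSw
      have h1 : F 0 = g ⟨(0 : C) + w, hs⟩ := dif_pos hs
      have h2 : (⟨(0 : C) + w, hs⟩ : {x : C // IsSuppIdem x w}) = ⟨w, hSw⟩ :=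
        Subtype.ext (zero_add w)
      rw [h1, h2]
      exact (hg.2.2.2.2 _).mpr rfl
    · -- additivity
      intro x y
      rcases Classical.em (IsSuppIdem (x + w) w) with hx | hx
      · rcases Classical.em (IsSuppIdem (y + w) w) with hy | hy
        · have hz : IsSuppIdem ((x + y) + w) w := by
            rw [isSuppIdem_iff_eps, ← hadd_eq, eps_add,
              (isSuppIdem_iff_eps.mp hx), (isSuppIdem_iff_eps.mp hy), hw.1]
          have h1 : F (x + y) = g ⟨(x + y) + w, hz⟩ := dif_pos hz
          have h2 : F x = g ⟨x + w, hx⟩ := dif_pos hx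
          have h3 : F y = g ⟨y + w, hy⟩ := dif_pos hy
          rw [h1, h2, h3]
          exact hg.2.2.1 ⟨x + w, hx⟩ ⟨y + w, hy⟩ ⟨(x + y) + w, hz⟩ (hadd_eq x y)
        · have hz : ¬ IsSuppIdem ((x + y) + w) w := by
            intro hz
            apply hy
            rw [isSuppIdem_iff_eps]
            have h1 : eps ((x + y) + w) = eps (x + w) + eps (y + w) := by
              rw [← hadd_eq, eps_add]
            have h2 : eps (y + w) ≤ w := by
              have := isSuppIdem_iff_eps.mp hz
              rw [h1] at this
              calc eps (y + w) ≤ eps (x + w) + eps (y + w) := le_add_self' _ _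
              _ = w := this
            exact le_antisymm h2 (le_eps_of_idem_le hw.1 (le_add_self' w y))
          have h1 : F (x + y) = ⊤ := dif_neg hz
          have h2 : F y = ⊤ := dif_neg hy
          rw [h1, h2, add_top]
      · have hz : ¬ IsSuppIdem ((x + y) + w) w := by
          intro hz
          apply hx
          rw [isSuppIdem_iff_eps]
          have h1 : eps ((x + y) + w) = eps (x + w) + eps (y + w) := by
            rw [← hadd_eq, eps_add]
          have h2 : eps (x + w) ≤ w := by
            have := isSuppIdem_iff_eps.mp hz
            rw [h1] at this
            calc eps (x + w) ≤ eps (x + w) + eps (y + w) := le_add_self _ _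
            _ = w := this
          exact le_antisymm h2 (le_eps_of_idem_le hw.1 (le_add_self' w x))
        have h1 : F (x + y) = ⊤ := dif_neg hz
        have h2 : F x = ⊤ := dif_neg hx
        rw [h1, h2, top_add]
    · -- homogeneity
      intro t x
      have hpse : psmul t x + w = psmul t (x + w) := by
        rw [psmul_add, hw.1.psmul']
      rcases Classical.em (IsSuppIdem (x + w) w) with hx | hx
      · have ht : IsSuppIdem (psmul t x + w) w := by
          rw [isSuppIdem_iff_eps, hpse, eps_psmul, isSuppIdem_iff_eps.mp hx]
        have h1 : F (psmul t x) = g ⟨psmul t x + w, ht⟩ := dif_pos ht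
        have h2 : F x = g ⟨x + w, hx⟩ := dif_pos hx
        rw [h1, h2]
        exact hg.2.2.2.1 t ⟨x + w, hx⟩ ⟨psmul t x + w, ht⟩ hpse.symm
      · have ht : ¬ IsSuppIdem (psmul t x + w) w := by
          intro ht
          apply hx
          rw [isSuppIdem_iff_eps]
          rw [isSuppIdem_iff_eps, hpse, eps_psmul] at ht
          exact ht
        have h1 : F (psmul t x) = ⊤ := dif_neg ht
        have h2 : F x = ⊤ := dif_neg hx
        rw [h1, h2]
        exact (ENNReal.mul_top (by
          simp only [ne_eq, ENNReal.ofReal_eq_zero, not_le]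
          exact t.2)).symm
  -- sublevel sets are closed
  have hlev : ∀ a : ℝ≥0∞, a ≠ ⊤ → IsClosed {x : C | F x ≤ a} := by
    intro a ha
    have hset : {x : C | F x ≤ a} = (fun x : C => x + w) ⁻¹' SB w g a := by
      ext x
      constructor
      · intro hx
        rcases Classical.em (IsSuppIdem (x + w) w) with h | h
        · have hx2 : F x ≤ a := hx
          have hx' : g ⟨x + w, h⟩ ≤ a := by
            rwa [show F x = g ⟨x + w, h⟩ from dif_pos h] at hx2
          exact ⟨⟨x + w, h⟩, hx', rfl⟩
        · have hx2 : F x ≤ a := hx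
          have hx' : (⊤ : ℝ≥0∞) ≤ a := by
            rwa [show F x = ⊤ from dif_neg h] at hx2
          exact absurd (top_le_iff.mp hx') ha
      · rintro ⟨y, hy, hyval⟩
        have hyval' : (y : C) = x + w := hyval
        have h : IsSuppIdem (x + w) w := hyval' ▸ y.2
        have h2 : (⟨x + w, h⟩ : {x : C // IsSuppIdem x w}) = y := Subtype.ext hyval'.symm
        show F x ≤ a
        rw [show F x = g ⟨x + w, h⟩ from dif_pos h, h2]
        exact hy
    rw [hset]
    exact (isClosed_SB hw hg ha).preimage (continuous_add_const w)
  -- continuity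
  have hFcont : Continuous F := by
    rw [continuous_iff_continuousAt]
    intro x
    rcases Classical.em (IsSuppIdem (x + w) w) with hx | hx
    · set k : C → {x : C // IsSuppIdem x w} := fun y =>
        if h : IsSuppIdem (y + w) w then ⟨y + w, h⟩ else ⟨w, hSw⟩ with hk
      have hRs : IsOpen {y : C | eps (y + w) ≤ w} := isOpen_eps_le hw
      have hxmem : x ∈ {y : C | eps (y + w) ≤ w} := (hcond x).mp hx
      have hEv : ∀ᶠ y in 𝓝 x, F y = g (k y) ∧ ((k y) : C) = y + w := by
        filter_upwards [hRs.mem_nhds hxmem] with y hy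
        have h : IsSuppIdem (y + w) w := (hcond y).mpr hy
        constructor
        · rw [hF, hk]
          simp only
          rw [dif_pos h, dif_pos h]
        · rw [hk]
          simp only
          rw [dif_pos h]
      have hkx : k x = ⟨x + w, hx⟩ := dif_pos hx
      have hkten : Tendsto k (𝓝 x) (𝓝 (k x)) := by
        rw [tendsto_subtype_rng]
        have h1 : Tendsto (fun y : C => y + w) (𝓝 x) (𝓝 (x + w)) :=
          (continuous_add_const w).tendsto x
        have h2 : (fun y : C => y + w) =ᶠ[𝓝 x] fun y => ((k y) : C) := by
          filter_upwards [hEv] with y hy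
          exact hy.2.symm
        have h3 := h1.congr' h2
        rw [hkx]
        exact h3
      have hFx : F x = g (k x) := by
        rw [hkx, hF]
        simp only
        rw [dif_pos hx]
      unfold ContinuousAt
      rw [hFx]
      have h4 : Tendsto (fun y => g (k y)) (𝓝 x) (𝓝 (g (k x))) :=
        (hg.1.tendsto (k x)).comp hkten
      refine h4.congr' ?_
      filter_upwards [hEv] with y hy
      exact hy.1.symm
    · have hFx : F x = ⊤ := dif_neg hx
      unfold ContinuousAt
      rw [hFx]
      refine ENNReal.tendsto_nhds_top fun n => ?_
      have hcl : IsClosed {y : C | F y ≤ (n : ℝ≥0∞)} := hlev n (ENNReal.natCast_ne_top n)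
      have hxm : x ∈ {y : C | F y ≤ (n : ℝ≥0∞)}ᶜ := by
        simp only [Set.mem_compl_iff, Set.mem_setOf_eq, hFx, not_le]
        exact ENNReal.natCast_lt_top n
      filter_upwards [hcl.isOpen_compl.mem_nhds hxm] with y hy
      exact not_le.mp hy
  -- support
  have hsupp : IsSupp F w := by
    constructor
    · intro x hx
      rcases Classical.em (IsSuppIdem (x + w) w) with h | h
      · have hx2 : F x = 0 := hx
        have hx' : g ⟨x + w, h⟩ = 0 := by
          rwa [show F x = g ⟨x + w, h⟩ from dif_pos h] at hx2
        have := (hg.2.2.2.2 ⟨x + w, h⟩).mp hx'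
        simp only at this
        calc x ≤ x + w := le_add_self x w
        _ = w := this
      · have hx2 : F x = 0 := hx
        have hx' : (⊤ : ℝ≥0∞) = 0 := by
          rwa [show F x = ⊤ from dif_neg h] at hx2
        exact absurd hx' (by simp)
    · intro b hb
      exact hb hFw
  refine ⟨F, ⟨hlin, hFcont⟩, hsupp, ?_⟩
  funext x
  have h : IsSuppIdem (x.1 + w) w := by rw [x.2.1]; exact x.2
  have h1 : F x.1 = g ⟨x.1 + w, h⟩ := dif_pos h
  have h2 : (⟨x.1 + w, h⟩ : {x : C // IsSuppIdem x w}) = x := Subtype.ext x.2.1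
  rw [h1, h2]

end ECCone

/-- For a compact idempotent `w` of an extended Choquet cone with an
abundance of compact idempotents, the restriction map `f ↦ f|_{C_w}` is an ordered cone
isomorphism from `A_w(C) = {f ∈ A(C) : supp f = w}` onto `A₊(C_w)`: it is additive,
homogeneous, bijective, and an order isomorphism. -/
theorem stmt_10 {C : Type*} [ECCone C] (habund : ECCone.HasAbundantCompactIdem C)
    (w : C) (hw : ECCone.IsCompactIdem w) :
    (∀ f : C → ℝ≥0∞, ECCone.MemA f → ECCone.IsSupp f w →
      ECCone.MemAPlus w (fun x : {x : C // ECCone.IsSuppIdem x w} => f x.1)) ∧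
    (∀ f g : C → ℝ≥0∞,
      (fun x : {x : C // ECCone.IsSuppIdem x w} => (f + g) x.1) =
        (fun x : {x : C // ECCone.IsSuppIdem x w} => f x.1) +
          (fun x : {x : C // ECCone.IsSuppIdem x w} => g x.1)) ∧
    (∀ (t : PosReal) (f : C → ℝ≥0∞),
      (fun x : {x : C // ECCone.IsSuppIdem x w} => (fun y => ENNReal.ofReal t.1 * f y) x.1) =
        fun x : {x : C // ECCone.IsSuppIdem x w} => ENNReal.ofReal t.1 * f x.1) ∧
    (∀ f g : C → ℝ≥0∞, ECCone.MemA f → ECCone.IsSupp f w → ECCone.MemA g →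
      ECCone.IsSupp g w →
      (fun x : {x : C // ECCone.IsSuppIdem x w} => f x.1) =
        (fun x : {x : C // ECCone.IsSuppIdem x w} => g x.1) → f = g) ∧
    (∀ g : {x : C // ECCone.IsSuppIdem x w} → ℝ≥0∞, ECCone.MemAPlus w g →
      ∃ f : C → ℝ≥0∞, ECCone.MemA f ∧ ECCone.IsSupp f w ∧
        (fun x : {x : C // ECCone.IsSuppIdem x w} => f x.1) = g) ∧
    (∀ f g : C → ℝ≥0∞, ECCone.MemA f → ECCone.IsSupp f w → ECCone.MemA g →
      ECCone.IsSupp g w →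
      (f ≤ g ↔ (fun x : {x : C // ECCone.IsSuppIdem x w} => f x.1) ≤
        fun x : {x : C // ECCone.IsSuppIdem x w} => g x.1)) := by
  classical
  open ECCone in
  refine ⟨?_, ?_, ?_, ?_, ?_, ?_⟩
  · -- restriction lands in A₊(C_w)
    intro f hf hs
    refine ⟨hf.2.comp continuous_subtype_val, ?_, ?_, ?_, ?_⟩
    · intro x
      exact hf.ne_top_on_Cw hs x.2
    · intro x y z hxyz
      show f z.1 = f x.1 + f y.1
      rw [← hxyz]
      exact hf.1.2.1 x.1 y.1
    · intro t x y hxy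
      show f y.1 = ENNReal.ofReal t.1 * f x.1
      rw [← hxy]
      exact hf.1.2.2 t x.1
    · intro x
      constructor
      · intro h0
        exact le_antisymm (hs.1 h0) x.2.le
      · intro hxw
        show f x.1 = 0
        rw [hxw]
        exact hf.apply_supp_eq_zero hs
  · -- additivity of restriction
    intro f g
    rfl
  · -- homogeneity of restriction
    intro t f
    rfl
  · -- injectivity
    intro f g hf hsf hg hsg heq
    have h1 : f ≤ g := le_of_restrict_le hw hf hsf hg hsg (le_of_eq heq)
    have h2 : g ≤ f := le_of_restrict_le hw hg hsg hf hsf (le_of_eq heq.symm)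
    exact le_antisymm h1 h2
  · -- surjectivity
    intro g hg
    exact exists_extension hw hg
  · -- order isomorphism
    intro f g hf hsf hg hsg
    constructor
    · intro hle x
      exact hle x.1
    · exact le_of_restrict_le hw hf hsf hg hsg
end

section
/- Let C be an extended Choquet cone and let f, g ∈ Lsc(C) be such that f ◁ g. Then there exist h ∈ Lsc(C) and ε > 0 such that f + h = g and ε·g ≤ h pointwise. Moreover, if f, g ∈ Lsc_σ(C), then h may be chosen in Lsc_σ(C), and if f, g ∈ A(C), then h may be chosen in A(C). -/
open scoped ENNReal NNReal

/-- The intersection of a σ-compact set with a closed set is σ-compact. -/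
lemma isSigmaCompact_inter_closed {X : Type*} [TopologicalSpace X] {s t : Set X}
    (hs : IsSigmaCompact s) (ht : IsClosed t) : IsSigmaCompact (s ∩ t) := by
  obtain ⟨K, hK, rfl⟩ := hs
  rw [Set.iUnion_inter]
  exact isSigmaCompact_iUnion_of_isCompact _ fun n => (hK n).inter_right ht

/-- The union of two σ-compact sets is σ-compact. -/
lemma isSigmaCompact_union {X : Type*} [TopologicalSpace X] {s t : Set X}
    (hs : IsSigmaCompact s) (ht : IsSigmaCompact t) : IsSigmaCompact (s ∪ t) := by
  rw [Set.union_eq_iUnion]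
  exact isSigmaCompact_iUnion _ (by rintro (_ | _) <;> simpa)

/-- If `f ◁ g` in `Lsc(C)`, then `g = f + h` for some `h ∈ Lsc(C)` with
`h ≥ ε·g` for some `ε > 0`; moreover `h` can be chosen in `Lsc_σ(C)` (resp. `A(C)`) when
`f, g ∈ Lsc_σ(C)` (resp. `A(C)`). -/
theorem stmt_13 {C : Type*} [ECCone C] (f g : C → ℝ≥0∞)
    (hf : ECCone.MemLsc f) (hg : ECCone.MemLsc g) (hfg : ECCone.Lhd f g) :
    (∃ h : C → ℝ≥0∞, ECCone.MemLsc h ∧ (∀ x, f x + h x = g x) ∧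
      ∃ ε : ℝ, 0 < ε ∧ ∀ x, ENNReal.ofReal ε * g x ≤ h x) ∧
    (ECCone.MemLscSigma f → ECCone.MemLscSigma g →
      ∃ h : C → ℝ≥0∞, ECCone.MemLscSigma h ∧ (∀ x, f x + h x = g x) ∧
        ∃ ε : ℝ, 0 < ε ∧ ∀ x, ENNReal.ofReal ε * g x ≤ h x) ∧
    (ECCone.MemA f → ECCone.MemA g →
      ∃ h : C → ℝ≥0∞, ECCone.MemA h ∧ (∀ x, f x + h x = g x) ∧
        ∃ ε : ℝ, 0 < ε ∧ ∀ x, ENNReal.ofReal ε * g x ≤ h x) := by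
  classical
  obtain ⟨⟨ε₀, hε₀, hfle₀⟩, hcont⟩ := hfg
  set ε : ℝ := min ε₀ 1 with hεdef
  have hεpos : 0 < ε := lt_min hε₀ one_pos
  have hεle1 : ε ≤ 1 := min_le_right _ _
  have hofε : ENNReal.ofReal ε ≠ ⊤ := ENNReal.ofReal_ne_top
  have hofεpos : 0 < ENNReal.ofReal ε := ENNReal.ofReal_pos.mpr hεpos
  have hfle : ∀ x, f x ≤ ENNReal.ofReal (1 - ε) * g x := fun x =>
    (hfle₀ x).trans (mul_le_mul_left
      (ENNReal.ofReal_le_ofReal (by have := min_le_left ε₀ 1; simp only [hεdef]; linarith)) _)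
  have hf_le_g : ∀ x, f x ≤ g x := fun x => (hfle x).trans <| by
    calc ENNReal.ofReal (1 - ε) * g x ≤ 1 * g x :=
          mul_le_mul_left (ENNReal.ofReal_le_one.mpr (by linarith)) _
      _ = g x := one_mul _
  set h : C → ℝ≥0∞ := fun x => (g x - f x) ⊔ (ENNReal.ofReal ε * g x) with hhdef
  have hftop : ∀ x, g x ≠ ⊤ → f x ≠ ⊤ := fun x hx => ne_top_of_le_ne_top hx (hf_le_g x)
  have htop : ∀ x, g x = ⊤ → h x = ⊤ := by
    intro x hx
    simp [hhdef, hx, ENNReal.mul_top hofεpos.ne']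
  have hεg_le : ∀ x, ENNReal.ofReal ε * g x ≤ h x := fun x => le_sup_right
  have hfin : ∀ x, g x ≠ ⊤ → h x = g x - f x := by
    intro x hx
    have key : ENNReal.ofReal ε * g x ≤ g x - f x := by
      refine ENNReal.le_sub_of_add_le_right (hftop x hx) ?_
      calc ENNReal.ofReal ε * g x + f x
          ≤ ENNReal.ofReal ε * g x + ENNReal.ofReal (1 - ε) * g x :=
            add_le_add_right (hfle x) _
        _ = (ENNReal.ofReal ε + ENNReal.ofReal (1 - ε)) * g x := by rw [add_mul]
        _ = ENNReal.ofReal 1 * g x := by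
            rw [← ENNReal.ofReal_add hεpos.le (by linarith)]
            norm_num
        _ = g x := by simp
    simp [hhdef, sup_eq_left.mpr key]
  have hmain : ∀ x, f x + h x = g x := by
    intro x
    by_cases hx : g x = ⊤
    · rw [htop x hx, hx]; simp
    · rw [hfin x hx]
      exact add_tsub_cancel_of_le (hf_le_g x)
  obtain ⟨hf0, hfadd, hfsmul⟩ := hf.1
  obtain ⟨hg0, hgadd, hgsmul⟩ := hg.1
  have hlin : ECCone.IsLinFun h := by
    refine ⟨?_, ?_, ?_⟩
    · have h0 : g (0 : C) ≠ ⊤ := by rw [hg0]; exact ENNReal.zero_ne_top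
      rw [hfin 0 h0, hg0, hf0]; simp
    · intro x y
      by_cases hxy : g (x + y) = ⊤
      · rw [htop _ hxy]
        rw [hgadd] at hxy
        rcases ENNReal.add_eq_top.mp hxy with hx | hy
        · rw [htop _ hx]; simp
        · rw [htop _ hy]; simp
      · have hxyf : f (x + y) ≠ ⊤ := hftop _ hxy
        have e1 := hmain (x + y)
        have e2 : f (x + y) + (h x + h y) = g (x + y) := by
          rw [hgadd, ← hmain x, ← hmain y, hfadd]; ring
        exact (ENNReal.add_right_inj hxyf).mp (e1.trans e2.symm)
    · intro t x
      have htpos : (0 : ℝ≥0∞) < ENNReal.ofReal t.1 := ENNReal.ofReal_pos.mpr t.2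
      by_cases hx : g x = ⊤
      · have h1 : g (ECCone.psmul t x) = ⊤ := by
          rw [hgsmul, hx, ENNReal.mul_top htpos.ne']
        rw [htop _ h1, htop _ hx, ENNReal.mul_top htpos.ne']
      · have h1 : g (ECCone.psmul t x) ≠ ⊤ := by
          rw [hgsmul]; exact ENNReal.mul_ne_top ENNReal.ofReal_ne_top hx
        have hft : f (ECCone.psmul t x) ≠ ⊤ := hftop _ h1
        have e1 := hmain (ECCone.psmul t x)
        have e2 : f (ECCone.psmul t x) + ENNReal.ofReal t.1 * h x = g (ECCone.psmul t x) := by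
          rw [hgsmul, ← hmain x, mul_add, hfsmul]
        exact (ENNReal.add_right_inj hft).mp (e1.trans e2.symm)
  have hglsc := hg.2
  have hεg_event : ∀ x y, y < ENNReal.ofReal ε * g x → ∀ᶠ z in nhds x, y < h z := by
    intro x y hy
    have hdiv : (y / ENNReal.ofReal ε) < g x :=
      (ENNReal.div_lt_iff (Or.inl hofεpos.ne') (Or.inl hofε)).mpr (by rwa [mul_comm] at hy)
    filter_upwards [hglsc x _ hdiv] with z hz
    have : y < ENNReal.ofReal ε * g z := by
      rw [mul_comm]
      exact (ENNReal.div_lt_iff (Or.inl hofεpos.ne') (Or.inl hofε)).mp hz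
    exact this.trans_le (hεg_le z)
  have hlsc : LowerSemicontinuous h := by
    intro x y hy
    by_cases hx : g x = ⊤
    · refine hεg_event x y ?_
      rw [hx, ENNReal.mul_top hofεpos.ne']
      rw [htop x hx] at hy; exact hy
    · rcases lt_sup_iff.mp hy with h1 | h2
      · -- y < g x - f x
        have hfx : f x ≠ ⊤ := hftop x hx
        have hadd : y + f x < g x := (ENNReal.cancel_of_ne hfx).lt_tsub_iff_right.mp h1
        have hyfin : y ≠ ⊤ := (le_self_add.trans_lt hadd).ne_top
        obtain ⟨c, hc1, hc2⟩ := exists_between hadd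
        have hflt : f x < c - y := (ENNReal.cancel_of_ne hyfin).lt_tsub_iff_left.mpr hc1
        have hyc : y ≤ c := (le_self_add.trans_lt hc1).le
        have hev1 : ∀ᶠ z in nhds x, f z < c - y :=
          (hcont x hx).eventually_mem (Iio_mem_nhds hflt)
        filter_upwards [hev1, hglsc x c hc2] with z h1z h2z
        have hfz : f z ≠ ⊤ := h1z.ne_top
        have hlt : y + f z < g z :=
          calc y + f z ≤ y + (c - y) := add_le_add_right h1z.le _
            _ = c := add_tsub_cancel_of_le hyc
            _ < g z := h2z
        exact ((ENNReal.cancel_of_ne hfz).lt_tsub_iff_right.mpr hlt).trans_le le_sup_left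
      · exact hεg_event x y h2
  have hεg : ∃ ε' : ℝ, 0 < ε' ∧ ∀ x, ENNReal.ofReal ε' * g x ≤ h x := ⟨ε, hεpos, hεg_le⟩
  refine ⟨⟨h, ⟨hlin, hlsc⟩, hmain, hεg⟩, ?_, ?_⟩
  · -- σ-compact case
    rintro ⟨-, hfσ⟩ ⟨-, hgσ⟩
    refine ⟨h, ⟨⟨hlin, hlsc⟩, ?_⟩, hmain, hεg⟩
    intro a
    have hset : {x : C | (a : ℝ≥0∞) < h x} =
        (⋃ q : ℚ, {x : C | f x ≤ (Real.toNNReal q : ℝ≥0∞)} ∩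
          {x : C | ((a + Real.toNNReal q : ℝ≥0) : ℝ≥0∞) < g x}) ∪
        {x : C | ((((a : ℝ≥0∞) / ENNReal.ofReal ε).toNNReal : ℝ≥0∞)) < g x} := by
      have hdivtop : (a : ℝ≥0∞) / ENNReal.ofReal ε ≠ ⊤ :=
        (ENNReal.div_lt_top ENNReal.coe_ne_top hofεpos.ne').ne
      ext x
      simp only [Set.mem_setOf_eq, Set.mem_union, Set.mem_iUnion, Set.mem_inter_iff,
        ENNReal.coe_toNNReal hdivtop, ENNReal.coe_add]
      constructor
      · intro hx
        rcases lt_sup_iff.mp hx with h1 | h2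
        · left
          have hfx : f x ≠ ⊤ := by
            intro hfx
            rw [hfx, ENNReal.sub_top] at h1
            exact absurd h1 (by simp)
          have h1' : (a : ℝ≥0∞) + f x < g x :=
            (ENNReal.cancel_of_ne hfx).lt_tsub_iff_right.mp h1
          have h2' : f x < g x - (a : ℝ≥0∞) :=
            (ENNReal.cancel_of_ne ENNReal.coe_ne_top).lt_tsub_iff_left.mpr h1'
          obtain ⟨q, _, hq1, hq2⟩ := ENNReal.lt_iff_exists_rat_btwn.mp h2'
          exact ⟨q, hq1.le,
            (ENNReal.cancel_of_ne ENNReal.coe_ne_top).lt_tsub_iff_left.mp hq2⟩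
        · right
          exact (ENNReal.div_lt_iff (Or.inl hofεpos.ne') (Or.inl hofε)).mpr
            (by rwa [mul_comm] at h2)
      · rintro (⟨q, hq1, hq2⟩ | h2)
        · have hfx : f x ≠ ⊤ := ne_top_of_le_ne_top ENNReal.coe_ne_top hq1
          have hlt : (a : ℝ≥0∞) + f x < g x := (add_le_add_right hq1 _).trans_lt hq2
          exact lt_sup_iff.mpr (Or.inl ((ENNReal.cancel_of_ne hfx).lt_tsub_iff_right.mpr hlt))
        · refine lt_sup_iff.mpr (Or.inr ?_)
          rw [mul_comm]
          exact (ENNReal.div_lt_iff (Or.inl hofεpos.ne') (Or.inl hofε)).mp h2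
    rw [hset]
    refine isSigmaCompact_union (isSigmaCompact_iUnion _ fun q => ?_) (hgσ _)
    rw [Set.inter_comm]
    exact isSigmaCompact_inter_closed (hgσ _) (hf.2.isClosed_preimage _)
  · -- continuous case
    rintro ⟨-, hfc⟩ ⟨-, hgc⟩
    refine ⟨h, ⟨hlin, ?_⟩, hmain, hεg⟩
    rw [continuous_iff_continuousAt]
    intro x
    have hmul : ContinuousAt (fun z => ENNReal.ofReal ε * g z) x :=
      (ENNReal.continuous_const_mul hofε).continuousAt.comp hgc.continuousAt
    by_cases hx : g x = ⊤
    · have htends : Filter.Tendsto (fun z => ENNReal.ofReal ε * g z) (nhds x) (nhds ⊤) := by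
        have := hmul
        rwa [ContinuousAt, hx, ENNReal.mul_top hofεpos.ne'] at this
      have : Filter.Tendsto h (nhds x) (nhds ⊤) :=
        tendsto_nhds_top_mono' htends hεg_le
      rw [ContinuousAt, htop x hx]
      exact this
    · have hsub : ContinuousAt (fun z => g z - f z) x :=
        ENNReal.Tendsto.sub hgc.continuousAt hfc.continuousAt (Or.inl hx)
      exact hsub.max hmul
end

section
/- Let C be an extended Choquet cone. Let h, h', g ∈ Lsc(C) be such that h ◁ g + h' and h' ◁ h. Then supp(g + h') ≤ supp(g) and supp(g + h') is compact relative to supp(g). -/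
open scoped ENNReal NNReal

section Aux

open Filter Topology

variable {C : Type*} [ECCone C]

instance : CompactSpace C := ECCone.compact
instance : T2Space C := ECCone.t2
instance : ContinuousAdd C := ⟨ECCone.continuous_add'⟩

lemma eccone_isClosed_le : IsClosed {p : C × C | p.1 ≤ p.2} := by
  have hrange : {p : C × C | p.1 ≤ p.2} = Set.range (fun q : C × C => (q.1, q.1 + q.2)) := by
    ext ⟨x, y⟩
    simp only [Set.mem_setOf_eq, Set.mem_range, Prod.mk.injEq, ECCone.le_iff_exists_add]
    constructor
    · rintro ⟨z, hz⟩; exact ⟨(x, z), rfl, hz⟩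
    · rintro ⟨⟨a, b⟩, ha, hb⟩; exact ⟨b, by rw [← ha]; exact hb⟩
  rw [hrange]
  exact (isCompact_range (continuous_fst.prodMk ECCone.continuous_add')).isClosed

instance : OrderClosedTopology C := ⟨eccone_isClosed_le⟩

lemma linFun_mono {f : C → ℝ≥0∞} (hf : ECCone.IsLinFun f) : Monotone f := by
  intro x y hxy
  obtain ⟨z, rfl⟩ := (ECCone.le_iff_exists_add x y).1 hxy
  rw [hf.2.1]; exact le_self_add

lemma lsc_zeroSet_closed {f : C → ℝ≥0∞} (hf : LowerSemicontinuous f) :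
    IsClosed {x : C | f x = 0} := by
  have hset : {x : C | f x = 0} = (f ⁻¹' Set.Ioi 0)ᶜ := by
    ext x
    simp only [Set.mem_setOf_eq, Set.mem_compl_iff, Set.mem_preimage, Set.mem_Ioi, not_lt,
      nonpos_iff_eq_zero]
  rw [hset]
  exact (hf.isOpen_preimage 0).isClosed_compl

lemma le_clusterPt_of_mem {F : Filter C} {p c : C} (hp : ClusterPt p F) {s : Set C}
    (hs : s ∈ F) (hsc : ∀ y ∈ s, c ≤ y) : c ≤ p := by
  have h1 : p ∈ closure s := mem_closure_iff_clusterPt.2 (hp.mono (le_principal_iff.2 hs))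
  have h2 : closure s ⊆ Set.Ici c := by
    rw [← isClosed_Ici.closure_eq]
    exact closure_mono (fun y hy => hsc y hy)
  exact h2 h1

lemma clusterPt_le_of_mem {F : Filter C} {p c : C} (hp : ClusterPt p F) {s : Set C}
    (hs : s ∈ F) (hsc : ∀ y ∈ s, y ≤ c) : p ≤ c := by
  have h1 : p ∈ closure s := mem_closure_iff_clusterPt.2 (hp.mono (le_principal_iff.2 hs))
  have h2 : closure s ⊆ Set.Iic c := by
    rw [← isClosed_Iic.closure_eq]
    exact closure_mono (fun y hy => hsc y hy)
  exact h2 h1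

lemma lub_mem_of_directed {Z : Set C} (hcl : IsClosed Z) (hne : Z.Nonempty)
    (hdir : DirectedOn (· ≤ ·) Z) {w : C} (hw : IsLUB Z w) : w ∈ Z := by
  haveI : Nonempty Z := hne.to_subtype
  haveI : Nonempty C := ⟨0⟩
  set F : Filter C := ⨅ x : Z, 𝓟 (Z ∩ Set.Ici x.val) with hF
  have hdirF : Directed (· ≥ ·) (fun x : Z => 𝓟 (Z ∩ Set.Ici x.val)) := by
    rintro ⟨x, hx⟩ ⟨y, hy⟩
    obtain ⟨z, hz, hxz, hyz⟩ := hdir x hx y hy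
    refine ⟨⟨z, hz⟩, ?_, ?_⟩
    · exact principal_mono.2 (fun a ha => ⟨ha.1, hxz.trans ha.2⟩)
    · exact principal_mono.2 (fun a ha => ⟨ha.1, hyz.trans ha.2⟩)
  haveI hFne : F.NeBot :=
    iInf_neBot_of_directed hdirF (fun x => principal_neBot_iff.2 ⟨x.val, x.2, le_refl _⟩)
  obtain ⟨x₀, hx₀⟩ := hne
  have hFZ : F ≤ 𝓟 Z :=
    le_trans (iInf_le _ ⟨x₀, hx₀⟩) (principal_mono.2 Set.inter_subset_left)
  obtain ⟨q, hqZ, hq⟩ := (hcl.isCompact).exists_clusterPt hFZ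
  have hub : ∀ x ∈ Z, x ≤ q := by
    intro x hx
    have hmem : Z ∩ Set.Ici x ∈ F := mem_iInf_of_mem ⟨x, hx⟩ (mem_principal_self _)
    exact le_clusterPt_of_mem hq hmem (fun y hy => hy.2)
  have h1 : w ≤ q := hw.2 hub
  have h2 : q ≤ w := hw.1 hqZ
  have : q = w := le_antisymm h2 h1
  rwa [← this]

lemma supp_zero {f : C → ℝ≥0∞} (h0 : f 0 = 0) (hadd : ∀ x y, f (x + y) = f x + f y)
    (hlsc : LowerSemicontinuous f) {w : C} (hw : IsLUB {x : C | f x = 0} w) : f w = 0 := by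
  have hdir : DirectedOn (· ≤ ·) {x : C | f x = 0} := by
    intro x hx y hy
    refine ⟨x + y, ?_, ?_, ?_⟩
    · show f (x + y) = 0
      rw [hadd, Set.mem_setOf_eq.mp hx, Set.mem_setOf_eq.mp hy, add_zero]
    · exact (ECCone.le_iff_exists_add x (x + y)).2 ⟨y, rfl⟩
    · exact (ECCone.le_iff_exists_add y (x + y)).2 ⟨x, add_comm y x⟩
  exact lub_mem_of_directed (lsc_zeroSet_closed hlsc) ⟨0, h0⟩ hdir hw

end Aux

/-- If `h ◁ g + h'` and `h' ◁ h` in `Lsc(C)`, then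
`supp(g + h') ≤ supp(g)` and `supp(g + h')` is compact relative to `supp(g)`. -/
theorem stmt_14 {C : Type*} [ECCone C] (h h' g : C → ℝ≥0∞)
    (hh : ECCone.MemLsc h) (hh' : ECCone.MemLsc h') (hg : ECCone.MemLsc g)
    (h1 : ECCone.Lhd h (fun x => g x + h' x)) (h2 : ECCone.Lhd h' h)
    (w₁ w₂ : C) (hw₁ : ECCone.IsSupp (fun x => g x + h' x) w₁) (hw₂ : ECCone.IsSupp g w₂) :
    w₁ ≤ w₂ ∧ ECCone.CompactRelTo w₁ w₂ := by
  classical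
  open Filter Topology in
  -- basic facts
  have hgmono : Monotone g := linFun_mono hg.1
  have hh'mono : Monotone h' := linFun_mono hh'.1
  have hhmono : Monotone h := linFun_mono hh.1
  -- `g w₂ = 0`
  have hgw₂ : g w₂ = 0 := supp_zero hg.1.1 hg.1.2.1 hg.2 hw₂
  -- `(g + h') w₁ = 0`
  have hsum0 : g w₁ + h' w₁ = 0 := by
    have := supp_zero (f := fun x => g x + h' x)
      (by simp [hg.1.1, hh'.1.1])
      (by intro x y; simp only [hg.1.2.1, hh'.1.2.1]; ring)
      (hg.2.add hh'.2) hw₁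
    exact this
  have hgw₁ : g w₁ = 0 := by
    have := add_eq_zero.mp hsum0; exact this.1
  have hh'w₁ : h' w₁ = 0 := (add_eq_zero.mp hsum0).2
  -- `h w₁ = 0`
  obtain ⟨ε, hε, hle1⟩ := h1.1
  obtain ⟨ε', hε', hle2⟩ := h2.1
  have hhw₁ : h w₁ = 0 := by
    have := hle1 w₁
    simp only [hsum0, mul_zero] at this
    exact le_zero_iff.mp this
  -- first part
  have hpart1 : w₁ ≤ w₂ := by
    apply hw₁.2
    intro x hx
    apply hw₂.1
    exact (add_eq_zero.mp hx).1
  refine ⟨hpart1, ?_⟩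
  -- second part
  intro D hDne hDidem hDdir m hm hmw₁
  haveI : Nonempty D := hDne.to_subtype
  haveI : Nonempty C := ⟨0⟩
  -- the filter of tails of the net `u ↦ u ⊓ w₂`
  set φ : C → C := fun v => v ⊓ w₂ with hφ
  set G : Filter C := ⨅ u : D, 𝓟 (φ '' (D ∩ Set.Iic u.val)) with hG
  have hdirG : Directed (· ≥ ·) (fun u : D => 𝓟 (φ '' (D ∩ Set.Iic u.val))) := by
    rintro ⟨x, hx⟩ ⟨y, hy⟩
    obtain ⟨z, hz, hxz, hyz⟩ := hDdir x hx y hy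
    refine ⟨⟨z, hz⟩, ?_, ?_⟩
    · exact principal_mono.2 (Set.image_mono (fun a ha => ⟨ha.1, ha.2.trans hxz⟩))
    · exact principal_mono.2 (Set.image_mono (fun a ha => ⟨ha.1, ha.2.trans hyz⟩))
  haveI hGne : G.NeBot := iInf_neBot_of_directed hdirG
    (fun u => principal_neBot_iff.2 ⟨φ u.val, Set.mem_image_of_mem _ ⟨u.2, le_refl _⟩⟩)
  obtain ⟨p, hp⟩ := exists_clusterPt_of_compactSpace G
  -- `p` is a lower bound of `D`
  have hplb : ∀ u ∈ D, p ≤ u := by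
    intro u hu
    have hmem : φ '' (D ∩ Set.Iic u) ∈ G := mem_iInf_of_mem ⟨u, hu⟩ (mem_principal_self _)
    have hple : p ≤ u ⊓ w₂ := by
      apply clusterPt_le_of_mem hp hmem
      rintro y ⟨v, ⟨hvD, hvu⟩, rfl⟩
      exact inf_le_inf_right w₂ hvu
    exact hple.trans inf_le_left
  have hpm : p ≤ m := hm.2 hplb
  have hpw₁ : p ≤ w₁ := hpm.trans hmw₁
  -- `h` is continuous at `p` and `h p = 0`
  have hfin : g p + h' p ≠ ⊤ := by
    have hle : g p + h' p ≤ g w₁ + h' w₁ := add_le_add (hgmono hpw₁) (hh'mono hpw₁)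
    rw [hsum0] at hle
    simp [le_zero_iff.mp hle]
  have hcont : ContinuousAt h p := h1.2 p hfin
  have hhp : h p = 0 := by
    have := hhmono hpw₁
    rw [hhw₁] at this
    exact le_zero_iff.mp this
  -- find an element of the net where `h < 1`
  have hV : h ⁻¹' Set.Iio 1 ∈ 𝓝 p := by
    have : Set.Iio (1 : ℝ≥0∞) ∈ 𝓝 (h p) := by
      rw [hhp]; exact Iio_mem_nhds (by norm_num)
    exact hcont this
  obtain ⟨u₀, hu₀⟩ := hDne
  have hsmem : φ '' (D ∩ Set.Iic u₀) ∈ G := mem_iInf_of_mem ⟨u₀, hu₀⟩ (mem_principal_self _)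
  have hnb : (𝓝 p ⊓ G).NeBot := hp
  have hinter : (h ⁻¹' Set.Iio 1 ∩ φ '' (D ∩ Set.Iic u₀)).Nonempty :=
    Filter.nonempty_of_mem (Filter.inter_mem (Filter.mem_inf_of_left hV)
      (Filter.mem_inf_of_right hsmem))
  obtain ⟨y, hy1, v, ⟨hvD, -⟩, rfl⟩ := hinter
  -- now `y = v ⊓ w₂` with `h y < 1`; show `g y = 0` and `h' y = 0`
  have hgy : g (φ v) = 0 := by
    have := hgmono (inf_le_right : φ v ≤ w₂)
    rw [hgw₂] at this
    exact le_zero_iff.mp this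
  have hhy : h (φ v) < 1 := hy1
  have hh'fin : h' (φ v) ≠ ⊤ := by
    have hle : h' (φ v) ≤ ENNReal.ofReal (1 - ε') * h (φ v) := hle2 (φ v)
    intro htop
    rw [htop] at hle
    have : ENNReal.ofReal (1 - ε') * h (φ v) < ⊤ :=
      ENNReal.mul_lt_top ENNReal.ofReal_lt_top (hhy.trans (by norm_num))
    exact this.ne (top_le_iff.mp hle)
  -- the self-majorization
  have hself : h' (φ v) ≤ (ENNReal.ofReal (1 - ε') * ENNReal.ofReal (1 - ε)) * h' (φ v) := by
    calc h' (φ v) ≤ ENNReal.ofReal (1 - ε') * h (φ v) := hle2 (φ v)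
      _ ≤ ENNReal.ofReal (1 - ε') * (ENNReal.ofReal (1 - ε) * (g (φ v) + h' (φ v))) :=
          mul_le_mul_right (hle1 (φ v)) _
      _ = (ENNReal.ofReal (1 - ε') * ENNReal.ofReal (1 - ε)) * h' (φ v) := by
          rw [hgy, zero_add, mul_assoc]
  have hclt : (ENNReal.ofReal (1 - ε') * ENNReal.ofReal (1 - ε)) < 1 := by
    calc ENNReal.ofReal (1 - ε') * ENNReal.ofReal (1 - ε)
        ≤ ENNReal.ofReal (1 - ε') * 1 :=
          mul_le_mul_right (le_of_lt (ENNReal.ofReal_lt_one.2 (by linarith))) _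
      _ = ENNReal.ofReal (1 - ε') := mul_one _
      _ < 1 := ENNReal.ofReal_lt_one.2 (by linarith)
  have hh'y : h' (φ v) = 0 := by
    by_contra hne0
    have := ENNReal.mul_lt_mul_left hne0 hh'fin hclt
    rw [one_mul] at this
    exact absurd hself (not_le.2 this)
  -- conclude
  refine ⟨v, hvD, ?_⟩
  apply hw₁.1
  show g (φ v) + h' (φ v) = 0
  rw [hgy, hh'y, add_zero]
end
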